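/- arXiv:2102.12264 — 10 statements merged into one kernel-verified Lean document; each statement's English description precedes it below -/
import Mathlib

section
/- Let A be an n×n matrix with entries in ℝ ∪ {-∞} (no entry equal to +∞). The following are equivalent: (a) G(A) ∈ Γ, i.e. (A^k)_{ii} ≤ 0 for every index i and every integer k ≥ 1; (b) there exists a vector x ∈ ℝ^n such that x_i ≥ A_{ij} + x_j for all indices i, j (i.e. x ⪰ A ⊗ x); (c) every entry of the Kleene star A^* is different from +∞. -/
open scoped Classical

namespace NCP

/-- Square max-plus matrices over the extended reals. -/
abbrev MPMat (n : ℕ) := Fin n → Fin n → EReal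

/-- Max-plus matrix product: `(A ⊗ B) i j = ⨆ k, A i k + B k j`. -/
noncomputable def mpMul {n : ℕ} (A B : MPMat n) : MPMat n :=
  fun i j => ⨆ k : Fin n, A i k + B k j

/-- Max-plus identity matrix `E_⊗`. -/
noncomputable def mpId {n : ℕ} : MPMat n :=
  fun i j => if i = j then 0 else ⊥

/-- Max-plus matrix powers. -/
noncomputable def mpPow {n : ℕ} (A : MPMat n) : ℕ → MPMat n
  | 0 => mpId
  | k + 1 => mpMul A (mpPow A k)

/-- Entrywise Kleene star `(A^*) i j = ⨆ k, (A^k) i j`. -/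
noncomputable def mpStar {n : ℕ} (A : MPMat n) : MPMat n :=
  fun i j => ⨆ k : ℕ, mpPow A k i j

/-- Entrywise max of two matrices, `A ⊕ B`. -/
noncomputable def mpAdd {n : ℕ} (A B : MPMat n) : MPMat n :=
  fun i j => max (A i j) (B i j)

/-- `G(A) ∈ Γ`: all diagonal entries of all positive powers are ≤ 0. -/
def InGamma {n : ℕ} (A : MPMat n) : Prop :=
  ∀ i : Fin n, ∀ k : ℕ, 1 ≤ k → mpPow A k i i ≤ 0

/-- `λA`: the matrix with entries `λ + A i j`. -/
noncomputable def sm {n : ℕ} (lam : ℝ) (A : MPMat n) : MPMat n :=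
  fun i j => (lam : EReal) + A i j

/-- Division of an extended real by a natural number (±∞ map to ±∞). -/
noncomputable def edivNat (x : EReal) (k : ℕ) : EReal :=
  if x = ⊤ then ⊤ else if x = ⊥ then ⊥ else ((x.toReal / k : ℝ) : EReal)

/-- The maximum circuit mean of a max-plus matrix. -/
noncomputable def mcm {n : ℕ} (M : MPMat n) : EReal :=
  ⨆ k ∈ Finset.Icc 1 n, ⨆ i : Fin n, edivNat (mpPow M k i i) k

/-- Morphism from words to max-plus matrices determined by `f` on letters. -/
noncomputable def wordMat {α : Type*} {n : ℕ} (f : α → MPMat n) : List α → MPMat n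
  | [] => mpId
  | z :: s => mpMul (f z) (wordMat f s)

/-- Entrywise extension of `wordMat` to languages: `μ(L) i j = ⨆ s ∈ L, μ(s) i j`. -/
noncomputable def langMat {α : Type*} {n : ℕ} (f : α → MPMat n) (L : Language α) : MPMat n :=
  fun i j => ⨆ s ∈ L, wordMat f s i j

/-- The recursive sequence of languages `S(L₁, L₂, k)`. -/
def SL {α : Type*} (L1 L2 : Language α) : ℕ → Language α
  | 0 => 1
  | k + 1 => L1 * SL L1 L2 k * SL L1 L2 k * L2 + L2 * SL L1 L2 k * SL L1 L2 k * L1 + 1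




lemma ereal_add_iSup {ι : Sort*} (a : EReal) (ha : a ≠ ⊤) (f : ι → EReal) :
    a + ⨆ i, f i = ⨆ i, a + f i := by
  rcases eq_or_ne a ⊥ with rfl | hbot
  · refine le_antisymm ?_ ?_
    · simp [EReal.bot_add]
    · exact iSup_le fun i => by simp [EReal.bot_add]
  · lift a to ℝ using ⟨ha, hbot⟩
    refine le_antisymm ?_ (iSup_le fun i => add_le_add_right (le_iSup f i) _)
    have key : (⨆ i, f i) ≤ ((-a : ℝ) : EReal) + ⨆ i, (a : EReal) + f i := by
      refine iSup_le fun i => ?_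
      have h1 : f i = ((-a : ℝ) : EReal) + ((a : EReal) + f i) := by
        rw [← add_assoc, ← EReal.coe_add, neg_add_cancel, EReal.coe_zero, zero_add]
      calc f i = ((-a : ℝ) : EReal) + ((a : EReal) + f i) := h1
        _ ≤ ((-a : ℝ) : EReal) + ⨆ i, (a : EReal) + f i :=
            add_le_add_right (le_iSup (fun i => (a : EReal) + f i) i) _
    calc (a : EReal) + ⨆ i, f i
        ≤ (a : EReal) + (((-a : ℝ) : EReal) + ⨆ i, (a : EReal) + f i) := add_le_add_right key _
      _ = ⨆ i, (a : EReal) + f i := by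
          rw [← add_assoc, ← EReal.coe_add, add_neg_cancel, EReal.coe_zero, zero_add]

lemma mpPow_succ {n : ℕ} (A : MPMat n) (k : ℕ) (i j : Fin n) :
    mpPow A (k + 1) i j = ⨆ v, A i v + mpPow A k v j := rfl

lemma pow_ne_top {n : ℕ} (A : MPMat n) (hA : ∀ i j, A i j ≠ ⊤) :
    ∀ k (i j : Fin n), mpPow A k i j ≠ ⊤ := by
  intro k
  induction k with
  | zero =>
    intro i j
    show mpId i j ≠ ⊤
    unfold mpId
    split <;> simp
  | succ k ih =>
    intro i j
    rw [mpPow_succ]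
    rcases isEmpty_or_nonempty (Fin n) with hE | hN
    · rw [iSup_of_empty]; simp
    · obtain ⟨v0, hv0⟩ := Finite.exists_max (fun v => A i v + mpPow A k v j)
      exact ne_top_of_le_ne_top (EReal.add_lt_top (hA i v0) (ih v0 j)).ne (iSup_le hv0)

lemma pow_mul_le {n : ℕ} (A : MPMat n) (hA : ∀ i j, A i j ≠ ⊤) :
    ∀ a b (i v j : Fin n), mpPow A a i v + mpPow A b v j ≤ mpPow A (a + b) i j := by
  intro a
  induction a with
  | zero =>
    intro b i v j
    rw [Nat.zero_add]
    show mpId i v + mpPow A b v j ≤ mpPow A b i j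
    unfold mpId
    by_cases hiv : i = v
    · subst hiv; simp
    · simp [hiv, EReal.bot_add]
  | succ a ih =>
    intro b i v j
    rw [mpPow_succ, add_comm (⨆ u, A i u + mpPow A a u v) (mpPow A b v j),
      ereal_add_iSup _ (pow_ne_top A hA b v j)]
    refine iSup_le fun u => ?_
    have h1 : mpPow A b v j + (A i u + mpPow A a u v)
        = A i u + (mpPow A a u v + mpPow A b v j) := by
      rw [add_comm (mpPow A b v j) _, add_assoc]
    rw [h1]
    have h2 : A i u + (mpPow A a u v + mpPow A b v j) ≤ A i u + mpPow A (a + b) u j :=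
      add_le_add_right (ih b u v j) _
    refine h2.trans ?_
    have h3 : a + b + 1 = (a + 1) + b := by omega
    calc A i u + mpPow A (a + b) u j ≤ ⨆ w, A i w + mpPow A (a + b) w j :=
          le_iSup (fun w => A i w + mpPow A (a + b) w j) u
      _ = mpPow A ((a+1) + b) i j := by rw [← mpPow_succ, ← h3]

/-- path weight: `pw A i l j` is the weight of the walk starting at `i`,
visiting the vertices of `l`, with the requirement that the final vertex is `j`. -/
noncomputable def pw {n : ℕ} (A : MPMat n) : Fin n → List (Fin n) → Fin n → EReal
  | i, [], j => mpId i j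
  | i, v :: l, j => A i v + pw A v l j

lemma pw_le_pow {n : ℕ} (A : MPMat n) :
    ∀ (l : List (Fin n)) (i j : Fin n), pw A i l j ≤ mpPow A l.length i j := by
  intro l
  induction l with
  | nil => intro i j; exact le_rfl
  | cons v l ih =>
    intro i j
    show A i v + pw A v l j ≤ mpPow A (l.length + 1) i j
    rw [mpPow_succ]
    exact le_iSup_of_le v (add_le_add_right (ih v j) _)

lemma pw_split {n : ℕ} (A : MPMat n) (v : Fin n) (l₂ : List (Fin n)) (j : Fin n) :
    ∀ (l₁ : List (Fin n)) (i : Fin n),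
      pw A i (l₁ ++ v :: l₂) j = pw A i (l₁ ++ [v]) v + pw A v l₂ j := by
  intro l₁
  induction l₁ with
  | nil =>
    intro i
    show A i v + pw A v l₂ j = (A i v + mpId v v) + pw A v l₂ j
    rw [show mpId v v = 0 from if_pos rfl, add_zero]
  | cons a l₁ ih =>
    intro i
    show A i a + pw A a (l₁ ++ v :: l₂) j = (A i a + pw A a (l₁ ++ [v]) v) + pw A v l₂ j
    rw [ih a, add_assoc]

lemma pow_le_sup_pw {n : ℕ} (A : MPMat n) (hA : ∀ i j, A i j ≠ ⊤) :
    ∀ k (i j : Fin n), mpPow A k i j ≤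
      ⨆ (l : List (Fin n)) (_ : l.length = k), pw A i l j := by
  intro k
  induction k with
  | zero =>
    intro i j
    exact le_iSup₂_of_le [] rfl le_rfl
  | succ k ih =>
    intro i j
    rw [mpPow_succ]
    refine iSup_le fun v => ?_
    have h1 : A i v + mpPow A k v j ≤
        A i v + ⨆ (l : List (Fin n)) (_ : l.length = k), pw A v l j :=
      add_le_add_right (ih v j) _
    have h2 : A i v + (⨆ (l : List (Fin n)) (_ : l.length = k), pw A v l j)
        = ⨆ (l : List (Fin n)) (_ : l.length = k), (A i v + pw A v l j) := by
      rw [ereal_add_iSup _ (hA i v)]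
      exact iSup_congr fun l => ereal_add_iSup _ (hA i v) _
    refine h1.trans (h2.le.trans ?_)
    refine iSup₂_le fun l hl => ?_
    have : A i v + pw A v l j = pw A i (v :: l) j := rfl
    rw [this]
    exact le_iSup₂_of_le (v :: l) (by simp [hl]) le_rfl

lemma not_nodup_decomp {α : Type*} :
    ∀ (l : List α), ¬ l.Nodup → ∃ (a : α) (xs ys zs : List α),
      l = xs ++ a :: (ys ++ a :: zs) := by
  intro l
  induction l with
  | nil => intro h; exact absurd List.nodup_nil h
  | cons b t ih =>
    intro h
    by_cases hb : b ∈ t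
    · obtain ⟨ys, zs, rfl⟩ := List.append_of_mem hb
      exact ⟨b, [], ys, zs, by simp⟩
    · have ht : ¬ t.Nodup := fun hnd => h (List.nodup_cons.mpr ⟨hb, hnd⟩)
      obtain ⟨a, xs, ys, zs, rfl⟩ := ih ht
      exact ⟨a, b :: xs, ys, zs, by simp⟩

lemma pw_bound {n : ℕ} (A : MPMat n) (hG : InGamma A) :
    ∀ (N : ℕ) (l : List (Fin n)), l.length ≤ N → ∀ (i j : Fin n),
      pw A i l j ≤ ⨆ m : Fin (n + 1), mpPow A (m : ℕ) i j := by
  intro N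
  induction N with
  | zero =>
    intro l hl i j
    have : l.length ≤ n := by omega
    exact (pw_le_pow A l i j).trans
      (le_iSup_of_le ⟨l.length, by omega⟩ le_rfl)
  | succ N ih =>
    intro l hl i j
    by_cases hlen : l.length ≤ n
    · exact (pw_le_pow A l i j).trans (le_iSup_of_le ⟨l.length, by omega⟩ le_rfl)
    · have hnd : ¬ (i :: l).Nodup := by
        intro hnd
        have := hnd.length_le_card
        simp only [List.length_cons, Fintype.card_fin] at this
        omega
      obtain ⟨v, xs, ys, zs, hdec⟩ := not_nodup_decomp _ hnd
      have hcyc : pw A v (ys ++ [v]) v ≤ (0 : EReal) := by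
        refine (pw_le_pow A (ys ++ [v]) v v).trans ?_
        have hlen2 : (ys ++ [v]).length = ys.length + 1 := by simp
        rw [hlen2]
        exact hG v (ys.length + 1) (by omega)
      cases xs with
      | nil =>
        simp only [List.nil_append, List.cons.injEq] at hdec
        obtain ⟨rfl, rfl⟩ := hdec
        calc pw A i (ys ++ i :: zs) j
            = pw A i (ys ++ [i]) i + pw A i zs j := pw_split A i zs j ys i
          _ ≤ 0 + pw A i zs j := add_le_add_left hcyc _
          _ = pw A i zs j := zero_add _
          _ ≤ ⨆ m : Fin (n + 1), mpPow A (m : ℕ) i j := by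
              refine ih zs ?_ i j
              simp only [List.length_append, List.length_cons] at hl
              omega
      | cons a xs' =>
        simp only [List.cons_append, List.cons.injEq] at hdec
        obtain ⟨rfl, rfl⟩ := hdec
        calc pw A i (xs' ++ v :: (ys ++ v :: zs)) j
            = pw A i (xs' ++ [v]) v + pw A v (ys ++ v :: zs) j :=
              pw_split A v (ys ++ v :: zs) j xs' i
          _ = pw A i (xs' ++ [v]) v + (pw A v (ys ++ [v]) v + pw A v zs j) := by
              rw [pw_split A v zs j ys v]
          _ ≤ pw A i (xs' ++ [v]) v + (0 + pw A v zs j) :=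
              add_le_add_right (add_le_add_left hcyc _) _
          _ = pw A i (xs' ++ [v]) v + pw A v zs j := by rw [zero_add]
          _ = pw A i (xs' ++ v :: zs) j := (pw_split A v zs j xs' i).symm
          _ ≤ ⨆ m : Fin (n + 1), mpPow A (m : ℕ) i j := by
              refine ih (xs' ++ v :: zs) ?_ i j
              simp only [List.length_append, List.length_cons] at hl ⊢
              omega


lemma star_ne_top {n : ℕ} (A : MPMat n) (hA : ∀ i j, A i j ≠ ⊤) (hG : InGamma A)
    (i j : Fin n) : mpStar A i j ≠ ⊤ := by
  have hb : ∀ k, mpPow A k i j ≤ ⨆ m : Fin (n + 1), mpPow A (m : ℕ) i j := fun k =>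
    (pow_le_sup_pw A hA k i j).trans
      (iSup₂_le fun l _ => pw_bound A hG l.length l le_rfl i j)
  obtain ⟨m0, hm0⟩ := Finite.exists_max (fun m : Fin (n + 1) => mpPow A (m : ℕ) i j)
  exact ne_top_of_le_ne_top (pow_ne_top A hA m0 i j) ((iSup_le hb).trans (iSup_le hm0))

lemma star_ne_top_inGamma {n : ℕ} (A : MPMat n) (hA : ∀ i j, A i j ≠ ⊤)
    (h : ∀ i j, mpStar A i j ≠ ⊤) : InGamma A := by
  intro i k hk
  by_contra hpos
  push_neg at hpos
  have hcb : mpPow A k i i ≠ ⊥ := fun hb => by simp [hb] at hpos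
  have hct : mpPow A k i i ≠ ⊤ := pow_ne_top A hA k i i
  obtain ⟨r, hr⟩ : ∃ r : ℝ, mpPow A k i i = (r : EReal) :=
    ⟨(mpPow A k i i).toReal, (EReal.coe_toReal hct hcb).symm⟩
  have hr0 : (0 : ℝ) < r := by
    rw [hr] at hpos; exact_mod_cast hpos
  have hmul : ∀ m : ℕ, ((m * r : ℝ) : EReal) ≤ mpPow A (m * k) i i := by
    intro m
    induction m with
    | zero =>
      simp only [Nat.cast_zero, zero_mul, Nat.zero_mul, EReal.coe_zero]
      show (0 : EReal) ≤ mpId i i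
      simp [mpId]
    | succ m ih =>
      have h1 : (((m : ℕ) + 1 : ℕ) * r : ℝ) = (m : ℕ) * r + r := by push_cast; ring
      calc ((((m : ℕ) + 1 : ℕ) * r : ℝ) : EReal)
          = ((m * r : ℝ) : EReal) + (r : EReal) := by rw [h1, EReal.coe_add]
        _ ≤ mpPow A (m * k) i i + mpPow A k i i := add_le_add ih (hr ▸ le_rfl)
        _ ≤ mpPow A (m * k + k) i i := pow_mul_le A hA (m * k) k i i i
        _ = mpPow A ((m + 1) * k) i i := by rw [Nat.succ_mul]
  have hle : ∀ m : ℕ, ((m * r : ℝ) : EReal) ≤ mpStar A i i := fun m =>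
    (hmul m).trans (le_iSup (fun t => mpPow A t i i) (m * k))
  have hs_ne : mpStar A i i ≠ ⊤ := h i i
  have hs_nb : mpStar A i i ≠ ⊥ := fun hb => by
    have := hle 0
    rw [hb, le_bot_iff] at this
    exact (EReal.coe_ne_bot _) this
  obtain ⟨s, hs⟩ : ∃ s : ℝ, mpStar A i i = (s : EReal) :=
    ⟨(mpStar A i i).toReal, (EReal.coe_toReal hs_ne hs_nb).symm⟩
  obtain ⟨m, hm⟩ := exists_nat_gt (s / r)
  have h2 : ((m * r : ℝ) : EReal) ≤ (s : EReal) := hs ▸ hle m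
  have h3 : (m * r : ℝ) ≤ s := by exact_mod_cast h2
  have h4 : s < m * r := by
    rw [div_lt_iff₀ hr0] at hm; linarith
  linarith

lemma gamma_vec {n : ℕ} (A : MPMat n) (hA : ∀ i j, A i j ≠ ⊤) (hG : InGamma A) :
    ∃ x : Fin n → ℝ, ∀ i j, A i j + (x j : EReal) ≤ (x i : EReal) := by
  rcases isEmpty_or_nonempty (Fin n) with hE | hN
  · exact ⟨fun _ => 0, fun i => isEmptyElim i⟩
  set s : Fin n → EReal := fun i => ⨆ j, mpStar A i j with hsdef
  have h0 : ∀ i, (0 : EReal) ≤ s i := by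
    intro i
    have h1 : (0 : EReal) = mpPow A 0 i i := by simp [mpPow, mpId]
    calc (0 : EReal) = mpPow A 0 i i := h1
      _ ≤ mpStar A i i := le_iSup (fun t => mpPow A t i i) 0
      _ ≤ s i := le_iSup (fun j => mpStar A i j) i
  have htop : ∀ i, s i ≠ ⊤ := by
    intro i
    obtain ⟨j0, hj0⟩ := Finite.exists_max (fun j => mpStar A i j)
    exact ne_top_of_le_ne_top (star_ne_top A hA hG i j0) (iSup_le hj0)
  have hx : ∀ i, (((s i).toReal : ℝ) : EReal) = s i := fun i =>
    EReal.coe_toReal (htop i) (fun hb => absurd (hb ▸ h0 i) (by simp))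
  refine ⟨fun i => (s i).toReal, fun i j => ?_⟩
  rw [hx, hx]
  calc A i j + s j = ⨆ m, A i j + mpStar A j m := ereal_add_iSup _ (hA i j) _
    _ ≤ s i := by
        refine iSup_le fun m => ?_
        rw [show mpStar A j m = ⨆ t, mpPow A t j m from rfl,
          ereal_add_iSup _ (hA i j)]
        refine iSup_le fun t => ?_
        calc A i j + mpPow A t j m
            ≤ ⨆ u, A i u + mpPow A t u m := le_iSup (fun u => A i u + mpPow A t u m) j
          _ = mpPow A (t + 1) i m := rfl
          _ ≤ mpStar A i m := le_iSup (fun t => mpPow A t i m) (t + 1)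
          _ ≤ s i := le_iSup (fun w => mpStar A i w) m

lemma vec_gamma {n : ℕ} (A : MPMat n) (x : Fin n → ℝ)
    (hx : ∀ i j, A i j + (x j : EReal) ≤ (x i : EReal)) : InGamma A := by
  have key : ∀ k (i j : Fin n), mpPow A k i j + (x j : EReal) ≤ (x i : EReal) := by
    intro k
    induction k with
    | zero =>
      intro i j
      show mpId i j + _ ≤ _
      unfold mpId
      split
      · next h => subst h; rw [zero_add]
      · rw [EReal.bot_add]; exact bot_le
    | succ k ih =>
      intro i j
      rw [mpPow_succ, add_comm, ereal_add_iSup _ (EReal.coe_ne_top (x j))]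
      refine iSup_le fun u => ?_
      calc ((x j : ℝ) : EReal) + (A i u + mpPow A k u j)
          = A i u + (mpPow A k u j + (x j : EReal)) := by
            rw [add_comm ((x j : ℝ) : EReal) _, add_assoc]
        _ ≤ A i u + ((x u : ℝ) : EReal) := add_le_add_right (ih u j) _
        _ ≤ ((x i : ℝ) : EReal) := hx i u
  intro i k hk
  refine (EReal.addLECancellable_coe (x i)) ?_
  show ((x i : ℝ) : EReal) + mpPow A k i i ≤ ((x i : ℝ) : EReal) + 0
  rw [add_zero, add_comm]
  exact key k i i

/-- for a matrix with no `+∞` entry, the following are equivalent: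
`G(A) ∈ Γ`; existence of a real vector `x` with `x i ≥ A i j + x j` for all `i j`;
no entry of `A^*` equals `+∞`. -/
theorem stmt1 {n : ℕ} (A : MPMat n) (hA : ∀ i j, A i j ≠ ⊤) :
    (InGamma A ↔ ∃ x : Fin n → ℝ, ∀ i j, A i j + (x j : EReal) ≤ (x i : EReal)) ∧
    (InGamma A ↔ ∀ i j, mpStar A i j ≠ ⊤) := by
  constructor
  · exact ⟨fun hG => gamma_vec A hA hG, fun ⟨x, hx⟩ => vec_gamma A x hx⟩
  · exact ⟨fun hG i j => star_ne_top A hA hG i j, fun h => star_ne_top_inGamma A hA h⟩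

end NCP
end

section
/- Let A be an n×n matrix over the extended reals EReal. The following are equivalent: (i) G(A) ∈ Γ, i.e. (A^k)_{ii} ≤ 0 for every index i and every integer k ≥ 1; (ii) (A^*)_{ii} = 0 for every index i; (iii) (A^*)_{ii} ≠ +∞ for every index i. -/
open scoped Classical

namespace NCP

lemma mpPow_add_le {n : ℕ} (A : MPMat n) (a b : ℕ) (i k j : Fin n) :
    mpPow A a i k + mpPow A b k j ≤ mpPow A (a + b) i j := by
  induction a generalizing i with
  | zero =>
    by_cases h : i = k
    · subst h; simp [mpPow, mpId]
    · simp [mpPow, mpId, h]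
  | succ a ih =>
    haveI : Nonempty (Fin n) := ⟨i⟩
    have hrw : mpPow A (a + 1) i k = ⨆ l, A i l + mpPow A a l k := rfl
    obtain ⟨l, hl⟩ := exists_eq_ciSup_of_finite (f := fun l => A i l + mpPow A a l k)
    rw [hrw, ← hl]
    have h2 : A i l + mpPow A a l k + mpPow A b k j
        ≤ A i l + mpPow A (a + b) l j := by
      rw [add_assoc]
      exact add_le_add_right (ih l) _
    refine h2.trans ?_
    have h3 : a + 1 + b = (a + b) + 1 := by ring
    rw [h3]
    exact le_iSup (fun l => A i l + mpPow A (a + b) l j) l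

lemma nsmul_diag_le {n : ℕ} (A : MPMat n) (k : ℕ) (i : Fin n) (m : ℕ) :
    m • mpPow A k i i ≤ mpPow A (k * m) i i := by
  induction m with
  | zero => simp [mpPow, mpId]
  | succ m ih =>
    have h := mpPow_add_le A k (k * m) i i i
    have h2 : (m + 1) • mpPow A k i i = mpPow A k i i + m • mpPow A k i i := by
      rw [succ_nsmul, add_comm]
    rw [h2]
    have : k * (m + 1) = k + k * m := by ring
    rw [this]
    exact le_trans (add_le_add_right ih _) h

lemma coe_nsmul' (m : ℕ) (r : ℝ) : m • (r : EReal) = ((m * r : ℝ) : EReal) := by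
  induction m with
  | zero => simp
  | succ m ih =>
    rw [succ_nsmul, ih, ← EReal.coe_add]
    congr 1
    push_cast
    ring

lemma star_diag_top {n : ℕ} (A : MPMat n) (i : Fin n) (k : ℕ) (hk : 1 ≤ k)
    (hpos : 0 < mpPow A k i i) : mpStar A i i = ⊤ := by
  rcases eq_or_ne (mpPow A k i i) ⊤ with htop | hne
  · refine top_le_iff.mp ?_
    calc (⊤ : EReal) = mpPow A k i i := htop.symm
      _ ≤ mpStar A i i := le_iSup (fun m => mpPow A m i i) k
  · set c := mpPow A k i i with hc
    have hbot : c ≠ ⊥ := by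
      intro h; rw [h] at hpos; exact absurd hpos (by simp)
    lift c to ℝ using ⟨hne, hbot⟩ with r hr
    have hrpos : (0 : ℝ) < r := by exact_mod_cast hpos
    rw [mpStar, iSup_eq_top]
    intro b hb
    -- choose m with b < m * r
    have hex : ∃ m : ℕ, b < ((m * r : ℝ) : EReal) := by
      rcases eq_or_ne b ⊥ with hbbot | hbbot
      · exact ⟨1, by rw [hbbot]; exact bot_lt_iff_ne_bot.mpr (by simp)⟩
      · lift b to ℝ using ⟨ne_of_lt hb, hbbot⟩ with br
        obtain ⟨m, hm⟩ := exists_nat_gt (br / r)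
        refine ⟨m, ?_⟩
        have : br < m * r := (div_lt_iff₀ hrpos).mp hm
        exact_mod_cast this
    obtain ⟨m, hm⟩ := hex
    refine ⟨k * m, lt_of_lt_of_le hm ?_⟩
    calc ((m * r : ℝ) : EReal) = m • ((r : EReal)) := (coe_nsmul' m r).symm
      _ = m • mpPow A k i i := by rw [hc]
      _ ≤ mpPow A (k * m) i i := nsmul_diag_le A k i m

/-- for any EReal matrix `A`, the following are equivalent:
`G(A) ∈ Γ`; all diagonal entries of `A^*` equal `0`; no diagonal entry of `A^*` is `+∞`. -/
theorem stmt2 {n : ℕ} (A : MPMat n) :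
    (InGamma A ↔ ∀ i : Fin n, mpStar A i i = 0) ∧
    (InGamma A ↔ ∀ i : Fin n, mpStar A i i ≠ ⊤) := by
  have h12 : InGamma A → ∀ i : Fin n, mpStar A i i = 0 := by
    intro h i
    apply le_antisymm
    · refine iSup_le fun m => ?_
      cases m with
      | zero => simp [mpPow, mpId]
      | succ m => exact h i (m + 1) (Nat.succ_le_succ (Nat.zero_le m))
    · have : mpPow A 0 i i = 0 := by simp [mpPow, mpId]
      calc (0 : EReal) = mpPow A 0 i i := this.symm
        _ ≤ mpStar A i i := le_iSup (fun m => mpPow A m i i) 0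
  have h23 : (∀ i : Fin n, mpStar A i i = 0) → ∀ i : Fin n, mpStar A i i ≠ ⊤ := by
    intro h i
    rw [h i]; simp
  have h31 : (∀ i : Fin n, mpStar A i i ≠ ⊤) → InGamma A := by
    intro h i k hk
    by_contra hlt
    exact h i (star_diag_top A i k hk (lt_of_not_ge hlt))
  exact ⟨⟨fun h => h12 h, fun h => h31 (h23 h)⟩, ⟨fun h => h23 (h12 h), h31⟩⟩

end NCP
end

section
/- Let A be an n×n matrix over the extended reals EReal and let i be an index. Then there exists an integer k ≥ 1 with (A^k)_{ii} > 0 (i.e. the precedence graph of A has a circuit of positive weight containing node i) if and only if (A^*)_{ii} = +∞. -/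
open scoped Classical

namespace NCP

lemma pow_add_ge {n : ℕ} (A : MPMat n) (a b : ℕ) (i m j : Fin n) :
    mpPow A a i m + mpPow A b m j ≤ mpPow A (a + b) i j := by
  induction a generalizing i with
  | zero =>
    simp only [mpPow, mpId, Nat.zero_add]
    by_cases h : i = m
    · subst h; simp
    · simp [h]
  | succ a ih =>
    have hne : Nonempty (Fin n) := ⟨i⟩
    obtain ⟨l, hl⟩ := Finite.exists_max (fun l => A i l + mpPow A a l m)
    have hsup : mpPow A (a + 1) i m = A i l + mpPow A a l m :=
      le_antisymm (iSup_le hl) (le_iSup (fun l => A i l + mpPow A a l m) l)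
    have h1 : mpPow A (a + 1) i m + mpPow A b m j
        ≤ A i l + mpPow A (a + b) l j := by
      rw [hsup, add_assoc]
      exact add_le_add (le_refl _) (ih l)
    have h2 : A i l + mpPow A (a + b) l j ≤ mpPow A (a + 1 + b) i j := by
      have : a + 1 + b = (a + b) + 1 := by omega
      rw [this]
      exact le_iSup (fun l' => A i l' + mpPow A (a + b) l' j) l
    exact h1.trans h2

/-- there is a circuit of positive weight through node `i`
(i.e. `(A^k) i i > 0` for some `k ≥ 1`) iff `(A^*) i i = +∞`. -/
theorem stmt3 {n : ℕ} (A : MPMat n) (i : Fin n) :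
    (∃ k : ℕ, 1 ≤ k ∧ 0 < mpPow A k i i) ↔ mpStar A i i = ⊤ := by
  constructor
  · rintro ⟨k, hk, hpos⟩
    by_cases htop : mpPow A k i i = ⊤
    · refine top_le_iff.mp ?_
      rw [← htop]
      exact le_iSup (fun m => mpPow A m i i) k
    · set c := mpPow A k i i with hc
      have hbot : c ≠ ⊥ := fun h => by simp [h] at hpos
      have hr : c = ((c.toReal : ℝ) : EReal) := (EReal.coe_toReal htop hbot).symm
      set r := c.toReal with hrdef
      have hrpos : 0 < r := by
        have h0 : (0 : EReal) < (r : EReal) := hr ▸ hpos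
        exact_mod_cast h0
      have key : ∀ m : ℕ, ((m * r : ℝ) : EReal) ≤ mpPow A (m * k) i i := by
        intro m
        induction m with
        | zero => simp [mpPow, mpId]
        | succ m ih =>
          have h1 : mpPow A k i i + mpPow A (m * k) i i ≤ mpPow A (k + m * k) i i :=
            pow_add_ge A k (m * k) i i i
          have h2 : ((m + 1 : ℕ) * r : ℝ) = r + m * r := by push_cast; ring
          have : (((m + 1 : ℕ) * r : ℝ) : EReal) ≤ mpPow A (k + m * k) i i := by
            rw [h2]
            calc ((r + m * r : ℝ) : EReal) = (r : EReal) + ((m * r : ℝ) : EReal) := by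
                  exact_mod_cast EReal.coe_add r (m * r)
              _ ≤ mpPow A k i i + mpPow A (m * k) i i := by
                  refine add_le_add ?_ ih
                  rw [hc] at hr; exact le_of_eq hr.symm
              _ ≤ _ := h1
          have heq : (m + 1) * k = k + m * k := by ring
          rw [heq]
          exact this
      rw [EReal.eq_top_iff_forall_lt]
      intro y
      obtain ⟨m, hm⟩ := exists_nat_gt (y / r)
      have hygt : y < m * r := by
        rw [div_lt_iff₀ hrpos] at hm
        linarith
      calc (y : EReal) < ((m * r : ℝ) : EReal) := by exact_mod_cast hygt
        _ ≤ mpPow A (m * k) i i := key m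
        _ ≤ ⨆ j : ℕ, mpPow A j i i := le_iSup (fun j => mpPow A j i i) (m * k)
  · intro htop
    by_contra hno
    push_neg at hno
    have hle : ∀ k : ℕ, mpPow A k i i ≤ 0 := by
      intro k
      cases k with
      | zero => simp [mpPow, mpId]
      | succ k => exact hno (k + 1) (Nat.succ_le_succ (Nat.zero_le k))
    have : mpStar A i i ≤ 0 := iSup_le hle
    rw [htop] at this
    exact absurd this (by simp)


end NCP
end

section
/- Let A₁, …, A_l be n×n matrices over the extended reals EReal, let μ be the monoid morphism mapping each word over the alphabet {a₁, …, a_l} to the max-plus product of the corresponding matrices (μ(ε) = E_⊗, μ(a_j) = A_j, μ(st) = μ(s) ⊗ μ(t)), and fix an index i. Then there exists a nonempty word s with μ(s)_{ii} > 0 if and only if there exists an integer k ≥ 1 with ((A₁ ⊕ ⋯ ⊕ A_l)^k)_{ii} > 0, where ⊕ denotes entrywise maximum. (Equivalently, the multi-precedence graph G(A₁, …, A_l) has a circuit with positive weight from node i iff the precedence graph G(A₁ ⊕ ⋯ ⊕ A_l) does.) -/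
open scoped Classical

namespace NCP

/-- `a + ⨆ f ≤ ⨆ (a + f)` over `EReal`, for a nonempty index type. -/
lemma ereal_add_iSup_le {ι : Type*} [Nonempty ι] (a : EReal) (f : ι → EReal) :
    a + ⨆ i, f i ≤ ⨆ i, a + f i := by
  induction a with
  | bot => simp
  | coe b =>
    refine le_of_forall_lt fun c hc => ?_
    have h1 : c - (b : EReal) < ⨆ i, f i := EReal.sub_lt_of_lt_add' hc
    obtain ⟨i, hi⟩ := lt_iSup_iff.mp h1
    have h2 : c - (b : EReal) + b < f i + b := EReal.add_lt_add_right_coe hi b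
    rw [EReal.sub_add_cancel] at h2
    exact lt_of_lt_of_le h2 (le_iSup_of_le i (by rw [add_comm]))
  | top =>
    rcases eq_or_ne (⨆ i, f i) ⊥ with h | h
    · rw [h]; simp
    · have : ∃ i, f i ≠ ⊥ := by
        by_contra hc
        push_neg at hc
        exact h (iSup_eq_bot.mpr hc)
      obtain ⟨i, hi⟩ := this
      calc (⊤ : EReal) + ⨆ i, f i ≤ ⊤ := le_top
        _ = ⊤ + f i := (EReal.top_add_of_ne_bot hi).symm
        _ ≤ ⨆ i, ⊤ + f i := le_iSup (fun j => (⊤ : EReal) + f j) i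

/-- Any word matrix entry is bounded by the corresponding power of the entrywise max. -/
lemma word_le_pow {n l : ℕ} (A : Fin l → MPMat n) :
    ∀ (s : List (Fin l)) (i j : Fin n),
      wordMat A s i j ≤ mpPow (fun i' j' => ⨆ m : Fin l, A m i' j') s.length i j := by
  intro s
  induction s with
  | nil => intro i j; simp [wordMat, mpPow]
  | cons z s ih =>
    intro i j
    simp only [wordMat, mpPow, mpMul, List.length_cons]
    exact iSup_mono fun p => add_le_add (le_iSup (fun m => A m i p) z) (ih p j)

/-- Any entry of a power of the entrywise max is bounded by the sup over words. -/
lemma pow_le_word {n l : ℕ} (hl : 0 < l) (A : Fin l → MPMat n) :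
    ∀ (k : ℕ) (i j : Fin n),
      mpPow (fun i' j' => ⨆ m : Fin l, A m i' j') k i j ≤
        ⨆ s : {s : List (Fin l) // s.length = k}, wordMat A s.1 i j := by
  haveI : Nonempty (Fin l) := ⟨⟨0, hl⟩⟩
  intro k
  induction k with
  | zero =>
    intro i j
    exact le_iSup_of_le ⟨[], rfl⟩ (le_of_eq rfl)
  | succ k ih =>
    intro i j
    haveI : Nonempty {s : List (Fin l) // s.length = k} :=
      ⟨⟨List.replicate k (Classical.arbitrary _), by simp⟩⟩
    simp only [mpPow, mpMul]
    refine iSup_le fun p => ?_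
    obtain ⟨m₀, hm₀⟩ := Finite.exists_max (fun m => A m i p)
    have hB : (⨆ m : Fin l, A m i p) = A m₀ i p :=
      le_antisymm (iSup_le hm₀) (le_iSup (fun m => A m i p) m₀)
    rw [hB]
    calc A m₀ i p + mpPow (fun i' j' => ⨆ m : Fin l, A m i' j') k p j
        ≤ A m₀ i p + ⨆ s : {s : List (Fin l) // s.length = k}, wordMat A s.1 p j :=
          add_le_add le_rfl (ih p j)
      _ ≤ ⨆ s : {s : List (Fin l) // s.length = k}, (A m₀ i p + wordMat A s.1 p j) :=
          ereal_add_iSup_le _ _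
      _ ≤ ⨆ t : {s : List (Fin l) // s.length = k + 1}, wordMat A t.1 i j := by
          refine iSup_le fun s => le_iSup_of_le ⟨m₀ :: s.1, by simp [s.2]⟩ ?_
          simp only [wordMat, mpMul]
          exact le_iSup (fun q => A m₀ i q + wordMat A s.1 q j) p

/-- the multi-precedence graph of the family `A : Fin l → MPMat n` has a
circuit of positive weight from node `i` (a nonempty word `s` with `μ(s) i i > 0`)
iff the precedence graph of the entrywise max `⨆ m, A m` does. -/
theorem stmt4 {n l : ℕ} (A : Fin l → MPMat n) (i : Fin n) :
    (∃ s : List (Fin l), s ≠ [] ∧ 0 < wordMat A s i i) ↔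
    (∃ k : ℕ, 1 ≤ k ∧ 0 < mpPow (fun i' j' => ⨆ m : Fin l, A m i' j') k i i) := by
  constructor
  · rintro ⟨s, hne, hpos⟩
    exact ⟨s.length, List.length_pos_iff.mpr hne, hpos.trans_le (word_le_pow A s i i)⟩
  · rintro ⟨k, hk, hpos⟩
    rcases Nat.eq_zero_or_pos l with hl | hl
    · exfalso
      subst hl
      cases k with
      | zero => omega
      | succ m =>
        have : mpPow (fun i' j' => ⨆ m : Fin 0, A m i' j') (m + 1) i i = ⊥ := by
          simp [mpPow, mpMul, iSup_of_empty]
        rw [this] at hpos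
        exact absurd hpos (by simp)
    · have := hpos.trans_le (pow_le_word hl A k i i)
      obtain ⟨s, hs⟩ := lt_iSup_iff.mp this
      refine ⟨s.1, ?_, hs⟩
      intro h
      have h2 := s.2
      rw [h] at h2
      simp at h2
      omega

end NCP
end

section
/- Let A and B be n×n matrices over the extended reals EReal. There exists an index i with ((A ⊗ B)^*)_{ii} = +∞ if and only if there exists an index k with ((B ⊗ A)^*)_{kk} = +∞. -/
open scoped Classical

namespace NCP

/- ### Auxiliary lemmas -/

lemma ereal_add_iSup_le_s5 {ι : Sort*} (c : EReal) (g : ι → EReal) :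
    c + (⨆ q, g q) ≤ ⨆ q, c + g q := by
  induction c with
  | bot => simp
  | top =>
    rcases eq_or_ne (⨆ q, g q) ⊥ with h | h
    · simp [h]
    · have h' : ∃ q, g q ≠ ⊥ := by
        by_contra hc
        push_neg at hc
        exact h (iSup_eq_bot.mpr hc)
      obtain ⟨q, hq⟩ := h'
      calc (⊤ : EReal) + ⨆ q, g q ≤ ⊤ := le_top
        _ = ⊤ + g q := (EReal.top_add_of_ne_bot hq).symm
        _ ≤ _ := le_iSup (fun q => (⊤ : EReal) + g q) q
  | coe r =>
    set S := ⨆ q, (r : EReal) + g q with hS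
    have h1 : ∀ q, g q ≤ S - r := by
      intro q
      rw [EReal.le_sub_iff_add_le (Or.inl (EReal.coe_ne_bot r))
        (Or.inl (EReal.coe_ne_top r)), add_comm]
      exact le_iSup (fun q => (r : EReal) + g q) q
    have h2 : (⨆ q, g q) ≤ S - r := iSup_le h1
    calc (r : EReal) + ⨆ q, g q ≤ r + (S - r) := add_le_add_right h2 _
      _ = (S - r) + r := add_comm _ _
      _ = S := by
          rw [sub_eq_add_neg, add_assoc, ← EReal.coe_neg, ← EReal.coe_add]
          norm_num

lemma ereal_add_iSup_s5 {ι : Sort*} (c : EReal) (g : ι → EReal) :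
    c + (⨆ q, g q) = ⨆ q, c + g q :=
  le_antisymm (ereal_add_iSup_le_s5 c g)
    (iSup_le fun q => add_le_add_right (le_iSup g q) c)

lemma ereal_iSup_add {ι : Sort*} (c : EReal) (g : ι → EReal) :
    (⨆ q, g q) + c = ⨆ q, g q + c := by
  rw [add_comm, ereal_add_iSup_s5]
  exact iSup_congr fun q => add_comm _ _

lemma mpId_mul {n : ℕ} (M : MPMat n) : mpMul mpId M = M := by
  funext i j
  show (⨆ k, mpId i k + M k j) = M i j
  refine le_antisymm (iSup_le fun k => ?_) ?_
  · by_cases h : i = k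
    · subst h; simp [mpId]
    · simp [mpId, h]
  · have : M i j = mpId i i + M i j := by simp [mpId]
    rw [this]
    exact le_iSup (fun k => mpId i k + M k j) i

lemma mul_mpId {n : ℕ} (M : MPMat n) : mpMul M mpId = M := by
  funext i j
  show (⨆ k, M i k + mpId k j) = M i j
  refine le_antisymm (iSup_le fun k => ?_) ?_
  · by_cases h : k = j
    · subst h; simp [mpId]
    · simp [mpId, h, EReal.add_bot]
  · have : M i j = M i j + mpId j j := by simp [mpId]
    rw [this]
    exact le_iSup (fun k => M i k + mpId k j) j

lemma mpMul_assoc {n : ℕ} (A B C : MPMat n) :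
    mpMul (mpMul A B) C = mpMul A (mpMul B C) := by
  funext i j
  show (⨆ q, (⨆ p, A i p + B p q) + C q j) = ⨆ p, A i p + ⨆ q, B p q + C q j
  calc (⨆ q, (⨆ p, A i p + B p q) + C q j)
      = ⨆ q, ⨆ p, (A i p + B p q) + C q j :=
        iSup_congr fun q => ereal_iSup_add _ _
    _ = ⨆ p, ⨆ q, A i p + (B p q + C q j) := by
        rw [iSup_comm]
        exact iSup_congr fun p => iSup_congr fun q => add_assoc _ _ _
    _ = ⨆ p, A i p + ⨆ q, (B p q + C q j) :=
        iSup_congr fun p => (ereal_add_iSup_s5 _ _).symm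

lemma pow_mul_comm {n : ℕ} (A B : MPMat n) (m : ℕ) :
    mpPow (mpMul A B) (m + 1) = mpMul A (mpMul (mpPow (mpMul B A) m) B) := by
  induction m with
  | zero =>
    show mpMul (mpMul A B) mpId = mpMul A (mpMul mpId B)
    rw [mul_mpId, mpId_mul]
  | succ m ih =>
    show mpMul (mpMul A B) (mpPow (mpMul A B) (m + 1)) = _
    rw [ih, mpMul_assoc A B, ← mpMul_assoc B A, ← mpMul_assoc (mpMul B A)]
    rfl

lemma fwd {n : ℕ} (A B : MPMat n) (h : ∃ i : Fin n, mpStar (mpMul A B) i i = ⊤) :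
    ∃ q : Fin n, mpStar (mpMul B A) q q = ⊤ := by
  obtain ⟨i, hi⟩ := h
  have hne : Nonempty (Fin n) := ⟨i⟩
  set T := ⨆ q : Fin n, mpStar (mpMul B A) q q with hT
  have key : ∀ m : ℕ, mpPow (mpMul A B) (m + 1) i i ≤ T := by
    intro m
    rw [pow_mul_comm]
    show (⨆ p, A i p + ⨆ q, mpPow (mpMul B A) m p q + B q i) ≤ T
    refine iSup_le fun p => le_trans (ereal_add_iSup_le_s5 _ _) (iSup_le fun q => ?_)
    have h1 : A i p + (mpPow (mpMul B A) m p q + B q i)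
        = (B q i + A i p) + mpPow (mpMul B A) m p q := by abel
    have h2 : B q i + A i p ≤ mpMul B A q p :=
      le_iSup (fun r => B q r + A r p) i
    have h3 : (B q i + A i p) + mpPow (mpMul B A) m p q
        ≤ mpMul B A q p + mpPow (mpMul B A) m p q := add_le_add_left h2 _
    have h4 : mpMul B A q p + mpPow (mpMul B A) m p q
        ≤ mpPow (mpMul B A) (m + 1) q q :=
      le_iSup (fun r => mpMul B A q r + mpPow (mpMul B A) m r q) p
    have h5 : mpPow (mpMul B A) (m + 1) q q ≤ mpStar (mpMul B A) q q :=
      le_iSup (fun k => mpPow (mpMul B A) k q q) (m + 1)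
    have h6 : mpStar (mpMul B A) q q ≤ T :=
      le_iSup (fun q : Fin n => mpStar (mpMul B A) q q) q
    calc A i p + (mpPow (mpMul B A) m p q + B q i)
        = (B q i + A i p) + mpPow (mpMul B A) m p q := h1
      _ ≤ _ := le_trans h3 (le_trans h4 (le_trans h5 h6))
  have hmaxT : (⊤ : EReal) ≤ max 0 T := by
    rw [← hi]
    refine iSup_le fun k => ?_
    cases k with
    | zero =>
      have : mpPow (mpMul A B) 0 i i = 0 := by simp [mpPow, mpId]
      rw [this]; exact le_max_left _ _
    | succ m => exact le_trans (key m) (le_max_right _ _)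
  have hT_top : T = ⊤ := by
    by_contra hT'
    have hlt : max (0 : EReal) T < ⊤ :=
      max_lt (lt_top_iff_ne_top.mpr (by norm_num)) (lt_top_iff_ne_top.mpr hT')
    exact absurd (top_le_iff.mp hmaxT) (ne_of_lt hlt)
  obtain ⟨q, hq⟩ :=
    exists_eq_ciSup_of_finite (f := fun q : Fin n => mpStar (mpMul B A) q q)
  exact ⟨q, by rw [hq, ← hT, hT_top]⟩

/-- `(A ⊗ B)^*` has a `+∞` diagonal entry iff `(B ⊗ A)^*` does. -/
theorem stmt5 {n : ℕ} (A B : MPMat n) :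
    (∃ i : Fin n, mpStar (mpMul A B) i i = ⊤) ↔
    (∃ k : Fin n, mpStar (mpMul B A) k k = ⊤) := by
  exact ⟨fwd A B, fwd B A⟩

end NCP
end

section
/- Let P, I, C be n×n matrices with entries in ℝ ∪ {-∞}. The solution set Λ(P, I, C) of the Proportional-Inverse-Constant non-positive circuit problem is order-convex: if λ₁, λ₂ ∈ Λ(P, I, C) and λ ∈ ℝ satisfies λ₁ ≤ λ ≤ λ₂, then λ ∈ Λ(P, I, C). -/
open scoped Classical

namespace NCP

/-- The matrix `λP ⊕ λ⁻¹I ⊕ C`. -/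
noncomputable def picMat {n : ℕ} (P I C : MPMat n) (lam : ℝ) : MPMat n :=
  fun i j => max (max ((lam : EReal) + P i j) (((-lam : ℝ) : EReal) + I i j)) (C i j)

/-- The solution set `Λ(P, I, C)` of the PIC non-positive circuit problem. -/
noncomputable def Lambda {n : ℕ} (P I C : MPMat n) : Set ℝ :=
  {lam : ℝ | InGamma (picMat P I C lam)}


/-- Convexity of an `EReal`-valued function of a real variable. -/
def Conv (f : ℝ → EReal) : Prop :=
  ∀ a b t : ℝ, 0 ≤ t → t ≤ 1 →
    f (t * a + (1 - t) * b) ≤ (t : EReal) * f a + ((1 - t : ℝ) : EReal) * f b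

lemma edistrib {t : ℝ} (ht : 0 ≤ t) (x y : EReal) :
    (t : EReal) * (x + y) = (t : EReal) * x + (t : EReal) * y := by
  rcases eq_or_lt_of_le ht with h | h
  · simp [← h]
  · have hpos : (0 : EReal) < (t : EReal) := by exact_mod_cast h
    induction x with
    | bot => simp [EReal.mul_bot_of_pos hpos]
    | coe x =>
      induction y with
      | bot => simp [EReal.mul_bot_of_pos hpos]
      | coe y => norm_cast; ring
      | top =>
        rw [EReal.coe_add_top, EReal.mul_top_of_pos hpos, ← EReal.coe_mul,
          EReal.coe_add_top]
    | top =>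
      induction y with
      | bot => simp [EReal.mul_bot_of_pos hpos, EReal.mul_top_of_pos hpos]
      | coe y =>
        rw [EReal.top_add_coe, EReal.mul_top_of_pos hpos, ← EReal.coe_mul,
          EReal.top_add_coe]
      | top => simp [EReal.mul_top_of_pos hpos]

lemma combo_top {t : ℝ} (ht : 0 ≤ t) (ht1 : t ≤ 1) :
    (t : EReal) * (⊤ : EReal) + ((1 - t : ℝ) : EReal) * (⊤ : EReal) = ⊤ := by
  rcases eq_or_lt_of_le ht with h | h
  · simp [← h, EReal.mul_top_of_pos]
  · have hpos : (0 : EReal) < (t : EReal) := by exact_mod_cast h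
    rw [EReal.mul_top_of_pos hpos]
    apply EReal.top_add_of_ne_bot
    rcases eq_or_lt_of_le ht1 with h1 | h1
    · simp [h1]
    · rw [EReal.mul_top_of_pos (by exact_mod_cast sub_pos.2 h1)]; simp

lemma conv_const (c : EReal) : Conv (fun _ => c) := by
  intro a b t ht ht1
  dsimp only
  induction c with
  | bot => simp
  | coe c =>
    have h : c = t * c + (1 - t) * c := by ring
    exact le_of_eq (by exact_mod_cast h)
  | top => rw [combo_top ht ht1]

lemma conv_affine (m : ℝ) (c : EReal) : Conv (fun x => ((m * x : ℝ) : EReal) + c) := by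
  intro a b t ht ht1
  dsimp only
  induction c with
  | bot => simp
  | coe c =>
    have h : m * (t * a + (1 - t) * b) + c = t * (m * a + c) + (1 - t) * (m * b + c) := by
      ring
    exact le_of_eq (by exact_mod_cast h)
  | top =>
    simp only [EReal.coe_add_top]
    rw [combo_top ht ht1]

lemma conv_add {f g : ℝ → EReal} (hf : Conv f) (hg : Conv g) :
    Conv (fun x => f x + g x) := by
  intro a b t ht ht1
  have h1 := hf a b t ht ht1
  have h2 := hg a b t ht ht1
  calc f (t * a + (1 - t) * b) + g (t * a + (1 - t) * b)
      ≤ ((t : EReal) * f a + ((1 - t : ℝ) : EReal) * f b) +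
        ((t : EReal) * g a + ((1 - t : ℝ) : EReal) * g b) := add_le_add h1 h2
    _ = ((t : EReal) * f a + (t : EReal) * g a) +
        (((1 - t : ℝ) : EReal) * f b + ((1 - t : ℝ) : EReal) * g b) := by
        rw [add_add_add_comm]
    _ = (t : EReal) * (f a + g a) + ((1 - t : ℝ) : EReal) * (f b + g b) := by
        rw [edistrib ht, edistrib (by linarith : (0:ℝ) ≤ 1 - t)]

lemma conv_max {f g : ℝ → EReal} (hf : Conv f) (hg : Conv g) :
    Conv (fun x => max (f x) (g x)) := by
  intro a b t ht ht1
  have ht' : (0 : EReal) ≤ (t : EReal) := by exact_mod_cast ht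
  have ht1' : (0 : EReal) ≤ ((1 - t : ℝ) : EReal) := by
    exact_mod_cast (by linarith : (0:ℝ) ≤ 1 - t)
  apply max_le
  · exact (hf a b t ht ht1).trans (add_le_add
      (mul_le_mul_of_nonneg_left (le_max_left _ _) ht')
      (mul_le_mul_of_nonneg_left (le_max_left _ _) ht1'))
  · exact (hg a b t ht ht1).trans (add_le_add
      (mul_le_mul_of_nonneg_left (le_max_right _ _) ht')
      (mul_le_mul_of_nonneg_left (le_max_right _ _) ht1'))

lemma conv_iSup {ι : Sort*} {f : ι → ℝ → EReal} (hf : ∀ i, Conv (f i)) :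
    Conv (fun x => ⨆ i, f i x) := by
  intro a b t ht ht1
  have ht' : (0 : EReal) ≤ (t : EReal) := by exact_mod_cast ht
  have ht1' : (0 : EReal) ≤ ((1 - t : ℝ) : EReal) := by
    exact_mod_cast (by linarith : (0:ℝ) ≤ 1 - t)
  apply iSup_le
  intro i
  exact (hf i a b t ht ht1).trans (add_le_add
    (mul_le_mul_of_nonneg_left (le_iSup (fun i => f i a) i) ht')
    (mul_le_mul_of_nonneg_left (le_iSup (fun i => f i b) i) ht1'))

lemma conv_id_affine (c : EReal) : Conv (fun x : ℝ => (x : EReal) + c) := by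
  have h : (fun x : ℝ => ((1 * x : ℝ) : EReal) + c) = fun x : ℝ => (x : EReal) + c := by
    funext x; norm_num
  rw [← h]; exact conv_affine 1 c

lemma conv_neg_affine (c : EReal) : Conv (fun x : ℝ => ((-x : ℝ) : EReal) + c) := by
  have h : (fun x : ℝ => (((-1) * x : ℝ) : EReal) + c) = fun x : ℝ => ((-x : ℝ) : EReal) + c := by
    funext x; norm_num
  rw [← h]; exact conv_affine (-1) c

lemma conv_picMat {n : ℕ} (P I C : MPMat n) (i j : Fin n) :
    Conv (fun lam => picMat P I C lam i j) := by
  unfold picMat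
  exact conv_max (conv_max (conv_id_affine (P i j)) (conv_neg_affine (I i j)))
    (conv_const (C i j))

lemma conv_pow {n : ℕ} (P I C : MPMat n) (k : ℕ) (i j : Fin n) :
    Conv (fun lam => mpPow (picMat P I C lam) k i j) := by
  induction k generalizing i j with
  | zero => exact conv_const (mpId i j)
  | succ k ih =>
    have h : (fun lam => mpPow (picMat P I C lam) (k + 1) i j) =
        fun lam => ⨆ k' : Fin n, picMat P I C lam i k' +
          mpPow (picMat P I C lam) k k' j := by
      funext lam; rfl
    rw [h]
    exact conv_iSup fun k' => conv_add (conv_picMat P I C i k') (ih k' j)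

/-- the solution set `Λ(P, I, C)` is order-convex. -/
theorem stmt7 {n : ℕ} (P I C : MPMat n)
    (hP : ∀ i j, P i j ≠ ⊤) (hI : ∀ i j, I i j ≠ ⊤) (hC : ∀ i j, C i j ≠ ⊤)
    (lam1 lam2 lam : ℝ) (h1 : lam1 ∈ Lambda P I C) (h2 : lam2 ∈ Lambda P I C)
    (hle1 : lam1 ≤ lam) (hle2 : lam ≤ lam2) : lam ∈ Lambda P I C := by
  rcases eq_or_lt_of_le (hle1.trans hle2) with heq | hlt
  · have : lam = lam1 := le_antisymm (heq ▸ hle2) hle1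
    rwa [this]
  · set t : ℝ := (lam2 - lam) / (lam2 - lam1) with hts
    have hd : 0 < lam2 - lam1 := by linarith
    have ht : 0 ≤ t := div_nonneg (by linarith) hd.le
    have ht1 : t ≤ 1 := by
      rw [div_le_one hd]; linarith
    have hcomb : t * lam1 + (1 - t) * lam2 = lam := by
      rw [hts]
      field_simp
      ring
    intro i k hk
    have hc := conv_pow P I C k i i lam1 lam2 t ht ht1
    rw [hcomb] at hc
    have ht' : (0 : EReal) ≤ (t : EReal) := by exact_mod_cast ht
    have ht1' : (0 : EReal) ≤ ((1 - t : ℝ) : EReal) := by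
      exact_mod_cast (by linarith : (0:ℝ) ≤ 1 - t)
    calc mpPow (picMat P I C lam) k i i
        ≤ (t : EReal) * mpPow (picMat P I C lam1) k i i +
          ((1 - t : ℝ) : EReal) * mpPow (picMat P I C lam2) k i i := hc
      _ ≤ (t : EReal) * 0 + ((1 - t : ℝ) : EReal) * 0 := add_le_add
          (mul_le_mul_of_nonneg_left (h1 i k hk) ht')
          (mul_le_mul_of_nonneg_left (h2 i k hk) ht1')
      _ = 0 := by simp

end NCP
end

section
/- Let P, I, C be n×n matrices with entries in ℝ ∪ {-∞} and let λ ∈ ℝ. Then G(λP ⊕ λ^{-1}I ⊕ C) ∈ Γ if and only if there exists a vector x ∈ ℝ^n such that for all indices i, j: x_i ≥ λ + P_{ij} + x_j, x_i ≥ -λ + I_{ij} + x_j, and x_i ≥ C_{ij} + x_j (inequalities of extended reals, with real entries coerced into EReal). -/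
open scoped Classical

namespace NCP

/- ----------------------------------------------------------------- -/
/- Auxiliary lemmas                                                   -/
/- ----------------------------------------------------------------- -/

lemma exists_iSup_eq {ι : Type*} [Finite ι] [Nonempty ι] (f : ι → EReal) :
    ∃ l, (⨆ t, f t) = f l := by
  obtain ⟨l, hl⟩ := Finite.exists_max f
  exact ⟨l, le_antisymm (iSup_le hl) (le_iSup f l)⟩

lemma max_add_le {a b c d : EReal} (h1 : a + c ≤ d) (h2 : b + c ≤ d) :
    max a b + c ≤ d := by
  rcases max_cases a b with ⟨h, _⟩ | ⟨h, _⟩ <;> rw [h] <;> assumption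

lemma pow_step {n : ℕ} (M : MPMat n) (p : ℕ) (i m j : Fin n) :
    M i m + mpPow M p m j ≤ mpPow M (p + 1) i j :=
  le_iSup (fun c => M i c + mpPow M p c j) m

lemma feasible_pow {n : ℕ} (M : MPMat n) (x : Fin n → ℝ)
    (hx : ∀ i j, M i j + (x j : EReal) ≤ (x i : EReal)) :
    ∀ k i j, mpPow M k i j + (x j : EReal) ≤ (x i : EReal) := by
  intro k
  induction k with
  | zero =>
    intro i j
    by_cases h : i = j <;> simp [mpPow, mpId, h]
  | succ k ih =>
    intro i j
    show mpMul M (mpPow M k) i j + _ ≤ _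
    rw [mpMul, ← EReal.le_sub_iff_add_le (Or.inl (EReal.coe_ne_bot _))
      (Or.inl (EReal.coe_ne_top _))]
    apply iSup_le
    intro m
    rw [EReal.le_sub_iff_add_le (Or.inl (EReal.coe_ne_bot _)) (Or.inl (EReal.coe_ne_top _))]
    calc M i m + mpPow M k m j + (x j : EReal)
        = M i m + (mpPow M k m j + (x j : EReal)) := add_assoc _ _ _
      _ ≤ M i m + (x m : EReal) := add_le_add_right (ih m j) _
      _ ≤ _ := hx i m

lemma feasible_inGamma {n : ℕ} (M : MPMat n) (x : Fin n → ℝ)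
    (hx : ∀ i j, M i j + (x j : EReal) ≤ (x i : EReal)) : InGamma M := by
  intro i k _
  have h := feasible_pow M x hx k i i
  exact ((EReal.addLECancellable_coe (x i)).add_le_add_iff_right).mp
    (by rw [zero_add]; exact h)

lemma inGamma_feasible : ∀ (n : ℕ) (M : MPMat n), (∀ i j, M i j ≠ ⊤) → InGamma M →
    ∃ x : Fin n → ℝ, ∀ i j, M i j + (x j : EReal) ≤ (x i : EReal) := by
  intro n
  induction n with
  | zero => exact fun M _ _ => ⟨fun i => i.elim0, fun i => i.elim0⟩
  | succ n IH =>
    intro M hM hG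
    set B : MPMat n := fun i j =>
      max (M i.castSucc j.castSucc) (M i.castSucc (Fin.last n) + M (Fin.last n) j.castSucc)
      with hBdef
    have hBpow : ∀ (k : ℕ) (i j : Fin n),
        mpPow B k i j ≤ ⨆ l : Fin (k + 1), mpPow M (k + l.val) i.castSucc j.castSucc := by
      intro k
      induction k with
      | zero =>
        intro i j
        have h0 : mpPow B 0 i j = mpPow M 0 i.castSucc j.castSucc := by
          simp [mpPow, mpId, Fin.castSucc_inj]
        rw [h0]
        exact le_iSup (fun l : Fin 1 => mpPow M (0 + l.val) i.castSucc j.castSucc) 0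
      | succ k ih =>
        intro i j
        show mpMul B (mpPow B k) i j ≤ _
        apply iSup_le
        intro m
        obtain ⟨l, hl⟩ := exists_iSup_eq
          (fun l : Fin (k + 1) => mpPow M (k + l.val) m.castSucc j.castSucc)
        have hm : mpPow B k m j ≤ mpPow M (k + l.val) m.castSucc j.castSucc :=
          hl ▸ ih m j
        show B i m + mpPow B k m j ≤ _
        rw [hBdef]
        apply max_add_le
        · have h1 : M i.castSucc m.castSucc + mpPow B k m j
              ≤ mpPow M (k + l.val + 1) i.castSucc j.castSucc :=
            le_trans (add_le_add_right hm _) (pow_step M (k + l.val) _ _ _)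
          refine h1.trans ?_
          have : k + l.val + 1 = (k + 1) + l.castSucc.val := by
            simp [Fin.castSucc]; omega
          rw [this]
          exact le_iSup (fun t : Fin (k + 2) =>
            mpPow M ((k + 1) + t.val) i.castSucc j.castSucc) l.castSucc
        · have h1 : M (Fin.last n) m.castSucc + mpPow B k m j
              ≤ mpPow M (k + l.val + 1) (Fin.last n) j.castSucc :=
            le_trans (add_le_add_right hm _) (pow_step M (k + l.val) _ _ _)
          have h2 : M i.castSucc (Fin.last n) + M (Fin.last n) m.castSucc + mpPow B k m j
              ≤ mpPow M (k + l.val + 2) i.castSucc j.castSucc := by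
            calc M i.castSucc (Fin.last n) + M (Fin.last n) m.castSucc + mpPow B k m j
                = M i.castSucc (Fin.last n)
                    + (M (Fin.last n) m.castSucc + mpPow B k m j) := add_assoc _ _ _
              _ ≤ M i.castSucc (Fin.last n)
                    + mpPow M (k + l.val + 1) (Fin.last n) j.castSucc := add_le_add_right h1 _
              _ ≤ mpPow M (k + l.val + 2) i.castSucc j.castSucc :=
                  pow_step M (k + l.val + 1) _ _ _
          refine h2.trans ?_
          have : k + l.val + 2 = (k + 1) + l.succ.val := by
            simp [Fin.succ]; omega
          rw [this]
          exact le_iSup (fun t : Fin (k + 2) =>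
            mpPow M ((k + 1) + t.val) i.castSucc j.castSucc) l.succ
    have hGB : InGamma B := by
      intro i k hk
      refine (hBpow k i i).trans (iSup_le fun l => ?_)
      exact hG i.castSucc (k + l.val) (hk.trans (Nat.le_add_right _ _))
    have hBtop : ∀ i j, B i j ≠ ⊤ := by
      intro i j
      rw [hBdef]
      exact (max_lt ((hM _ _).lt_top)
        (EReal.add_lt_top (hM _ _) (hM _ _))).ne
    obtain ⟨y, hy⟩ := IH B hBtop hGB
    set L : EReal := ⨆ j : Fin n, (M (Fin.last n) j.castSucc + (y j : EReal)) with hLdef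
    set U : EReal := ⨅ i : Fin n, ((y i : EReal) - M i.castSucc (Fin.last n)) with hUdef
    have hLU : L ≤ U := by
      rw [hLdef, hUdef]
      apply iSup_le; intro j; apply le_iInf; intro i
      refine (EReal.le_sub_iff_add_le (Or.inr (EReal.coe_ne_bot (y i)))
        (Or.inr (EReal.coe_ne_top (y i)))).2 ?_
      have h1 : M i.castSucc (Fin.last n) + M (Fin.last n) j.castSucc ≤ B i j := by
        rw [hBdef]; exact le_max_right _ _
      have h2 : (M i.castSucc (Fin.last n) + M (Fin.last n) j.castSucc) + (y j : EReal)
          ≤ (y i : EReal) := le_trans (add_le_add_left h1 _) (hy i j)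
      calc M (Fin.last n) j.castSucc + (y j : EReal) + M i.castSucc (Fin.last n)
          = (M i.castSucc (Fin.last n) + M (Fin.last n) j.castSucc) + (y j : EReal) := by
            rw [add_comm, ← add_assoc]
        _ ≤ (y i : EReal) := h2
    have hLtop : L ≠ ⊤ := by
      rcases Nat.eq_zero_or_pos n with h0 | hpos
      · subst h0
        rw [hLdef]
        simp
      · have : Nonempty (Fin n) := ⟨⟨0, hpos⟩⟩
        obtain ⟨l, hl⟩ := exists_iSup_eq
          (fun j : Fin n => M (Fin.last n) j.castSucc + (y j : EReal))
        rw [hLdef, hl]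
        exact (EReal.add_lt_top (hM _ _) (EReal.coe_ne_top _)).ne
    have hUbot : U ≠ ⊥ := by
      rcases Nat.eq_zero_or_pos n with h0 | hpos
      · subst h0
        rw [hUdef, iInf_of_empty]
        exact top_ne_bot
      · have : Nonempty (Fin n) := ⟨⟨0, hpos⟩⟩
        obtain ⟨l, hl⟩ := Finite.exists_min
          (fun i : Fin n => (y i : EReal) - M i.castSucc (Fin.last n))
        have hUeq : U = (y l : EReal) - M l.castSucc (Fin.last n) := by
          rw [hUdef]
          exact le_antisymm (iInf_le _ l) (le_iInf hl)
        rw [hUeq, sub_eq_add_neg, Ne, EReal.add_eq_bot_iff]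
        push_neg
        exact ⟨EReal.coe_ne_bot _, fun h => hM _ _ (EReal.neg_eq_bot_iff.1 h)⟩
    obtain ⟨r, hrL, hrU⟩ : ∃ r : ℝ, L ≤ (r : EReal) ∧ (r : EReal) ≤ U := by
      by_cases hL : L = ⊥
      · by_cases hU : U = ⊤
        · exact ⟨0, by simp [hL], by simp [hU]⟩
        · exact ⟨U.toReal, hL ▸ bot_le, EReal.coe_toReal_le hUbot⟩
      · refine ⟨L.toReal, ?_, ?_⟩
        · rw [EReal.coe_toReal hLtop hL]
        · rw [EReal.coe_toReal hLtop hL]; exact hLU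
    refine ⟨Fin.lastCases r y, ?_⟩
    intro i j
    induction i using Fin.lastCases with
    | last =>
      induction j using Fin.lastCases with
      | last =>
        simp only [Fin.lastCases_last]
        have hMe : M (Fin.last n) (Fin.last n) ≤ 0 := by
          have h1 := hG (Fin.last n) 1 le_rfl
          refine le_trans ?_ h1
          have h2 : M (Fin.last n) (Fin.last n) + mpId (Fin.last n) (Fin.last n)
              ≤ mpPow M 1 (Fin.last n) (Fin.last n) :=
            le_iSup (fun c => M (Fin.last n) c + mpId c (Fin.last n)) (Fin.last n)
          simpa [mpId] using h2
        calc M (Fin.last n) (Fin.last n) + (r : EReal)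
            ≤ 0 + (r : EReal) := add_le_add_left hMe _
          _ = (r : EReal) := zero_add _
      | cast j =>
        simp only [Fin.lastCases_last, Fin.lastCases_castSucc]
        refine le_trans ?_ hrL
        rw [hLdef]
        exact le_iSup (fun t : Fin n => M (Fin.last n) t.castSucc + (y t : EReal)) j
    | cast i =>
      induction j using Fin.lastCases with
      | last =>
        simp only [Fin.lastCases_last, Fin.lastCases_castSucc]
        have h1 : (r : EReal) ≤ (y i : EReal) - M i.castSucc (Fin.last n) := by
          refine hrU.trans ?_
          rw [hUdef]
          exact iInf_le _ i
        have h2 := EReal.add_le_of_le_sub h1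
        rwa [add_comm] at h2
      | cast j =>
        simp only [Fin.lastCases_castSucc]
        have h1 : M i.castSucc j.castSucc ≤ B i j := by
          rw [hBdef]; exact le_max_left _ _
        exact le_trans (add_le_add_left h1 _) (hy i j)

lemma key_iff {n : ℕ} (M : MPMat n) (hM : ∀ i j, M i j ≠ ⊤) :
    InGamma M ↔ ∃ x : Fin n → ℝ, ∀ i j, M i j + (x j : EReal) ≤ (x i : EReal) :=
  ⟨inGamma_feasible n M hM, fun ⟨x, hx⟩ => feasible_inGamma M x hx⟩

/-- `G(λP ⊕ λ⁻¹I ⊕ C) ∈ Γ` iff there is a real vector `x` with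
`x i ≥ λ + P i j + x j`, `x i ≥ -λ + I i j + x j` and `x i ≥ C i j + x j` for all `i j`. -/
theorem stmt9 {n : ℕ} (P I C : MPMat n)
    (hP : ∀ i j, P i j ≠ ⊤) (hI : ∀ i j, I i j ≠ ⊤) (hC : ∀ i j, C i j ≠ ⊤)
    (lam : ℝ) :
    InGamma (picMat P I C lam) ↔
      ∃ x : Fin n → ℝ, ∀ i j : Fin n,
        (lam : EReal) + P i j + (x j : EReal) ≤ (x i : EReal) ∧
        ((-lam : ℝ) : EReal) + I i j + (x j : EReal) ≤ (x i : EReal) ∧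
        C i j + (x j : EReal) ≤ (x i : EReal) := by
  have hMtop : ∀ i j, picMat P I C lam i j ≠ ⊤ := by
    intro i j
    show max (max ((lam : EReal) + P i j) (((-lam : ℝ) : EReal) + I i j)) (C i j) ≠ ⊤
    exact (max_lt (max_lt (EReal.add_lt_top (EReal.coe_ne_top _) (hP i j))
      (EReal.add_lt_top (EReal.coe_ne_top _) (hI i j))) ((hC i j).lt_top)).ne
  rw [key_iff _ hMtop]
  apply exists_congr
  intro x
  constructor
  · intro h i j
    have hmax := h i j
    refine ⟨?_, ?_, ?_⟩
    · exact le_trans (add_le_add_left ((le_max_left _ _).trans (le_max_left _ _)) _) hmax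
    · exact le_trans (add_le_add_left ((le_max_right _ _).trans (le_max_left _ _)) _) hmax
    · exact le_trans (add_le_add_left (le_max_right _ _) _) hmax
  · intro h i j
    obtain ⟨h1, h2, h3⟩ := h i j
    show max (max ((lam : EReal) + P i j) (((-lam : ℝ) : EReal) + I i j)) (C i j)
        + (x j : EReal) ≤ (x i : EReal)
    exact max_add_le (max_add_le h1 h2) h3

end NCP
end

section
/- Every x*x-balanced binary string of positive length is the concatenation of two x*y-balanced binary strings, each of positive length. -/
open scoped Classical

namespace NCP

/-- A binary string (over the alphabet `{a, b}`, encoded as `{true, false}`) is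
balanced if it has equally many occurrences of each letter. -/
def Balanced (s : List Bool) : Prop := s.count true = s.count false

/-- `x*x`-balanced: balanced and (empty or first letter = last letter). -/
def XXBal (s : List Bool) : Prop := Balanced s ∧ (s = [] ∨ s.head? = s.getLast?)

/-- `x*y`-balanced: balanced and (empty or first letter ≠ last letter). -/
def XYBal (s : List Bool) : Prop := Balanced s ∧ (s = [] ∨ s.head? ≠ s.getLast?)

def bal (x : Bool) (l : List Bool) : ℤ := (l.count x : ℤ) - (l.count !x : ℤ)

lemma bal_append (x : Bool) (l m : List Bool) : bal x (l ++ m) = bal x l + bal x m := by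
  simp [bal, List.count_append]; ring

lemma bal_single (x c : Bool) : bal x [c] = if c = x then 1 else -1 := by
  cases x <;> cases c <;> simp [bal]

lemma balanced_iff_bal (x : Bool) (l : List Bool) : Balanced l ↔ bal x l = 0 := by
  cases x <;> simp [bal, Balanced] <;> omega

lemma bal_step (x : Bool) (s : List Bool) (k : ℕ) (c : Bool) (hc : s[k]? = some c) :
    bal x (s.take (k+1)) = bal x (s.take k) + (if c = x then 1 else -1) := by
  have hk : k < s.length := by
    by_contra h
    rw [List.getElem?_eq_none (by omega)] at hc
    simp at hc
  have hgc : s[k]'hk = c := by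
    have h2 := List.getElem?_eq_getElem hk
    rw [hc] at h2
    exact (Option.some_inj.mp h2).symm
  rw [← List.take_concat_get' s k hk, bal_append, bal_single, hgc]

lemma bool_cases (b x : Bool) : b = x ∨ b = !x := by cases b <;> cases x <;> simp

/-- every `x*x`-balanced binary string of positive length is the
concatenation of two `x*y`-balanced binary strings of positive length. -/
theorem stmt11 (s : List Bool) (hs : XXBal s) (hne : s ≠ []) :
    ∃ t u : List Bool, XYBal t ∧ XYBal u ∧ t ≠ [] ∧ u ≠ [] ∧ s = t ++ u := by
  obtain ⟨hbal, hends⟩ := hs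
  rcases hends with rfl | hends
  · exact absurd rfl hne
  obtain ⟨x, hhead⟩ : ∃ x, s.head? = some x := ⟨s.head hne, List.head?_eq_head hne⟩
  have hnpos : 0 < s.length := List.length_pos_iff.2 hne
  have hlast : s.getLast? = some x := hends ▸ hhead
  set f : ℕ → ℤ := fun k => bal x (s.take k) with hf
  have hf0 : f 0 = 0 := by simp [hf, bal]
  have hfn : f s.length = 0 := by
    have h1 : s.take s.length = s := List.take_length
    simp only [hf, h1]
    exact (balanced_iff_bal x s).1 hbal
  have h0x : s[0]? = some x := by rw [← List.head?_eq_getElem?, hhead]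
  have hf1 : f 1 = 1 := by
    have hstep : f 1 = f 0 + (if x = x then 1 else -1) := bal_step x s 0 x h0x
    rw [hstep, hf0, if_pos rfl]; ring
  have hn2 : 2 ≤ s.length := by
    by_contra h
    have h1 : s.length = 1 := by omega
    rw [h1] at hfn; rw [hfn] at hf1; omega
  have hlastx : s[s.length - 1]? = some x := by
    rw [← List.getLast?_eq_getElem?, hlast]
  have hfn1 : f (s.length - 1) = -1 := by
    have hstep : f (s.length - 1 + 1) = f (s.length - 1) + (if x = x then 1 else -1) :=
      bal_step x s (s.length - 1) x hlastx
    rw [if_pos rfl, show s.length - 1 + 1 = s.length by omega, hfn] at hstep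
    omega
  have hex : ∃ j, f j < 0 := ⟨s.length - 1, by omega⟩
  obtain ⟨j, hjneg, hjmin⟩ : ∃ j, f j < 0 ∧ ∀ i < j, 0 ≤ f i :=
    ⟨Nat.find hex, Nat.find_spec hex, fun i hi => le_of_not_gt (Nat.find_min hex hi)⟩
  have hjle : j ≤ s.length - 1 := by
    by_contra h
    have := hjmin (s.length - 1) (by omega)
    omega
  have hj2 : 2 ≤ j := by
    by_contra h
    have h01 : j = 0 ∨ j = 1 := by omega
    rcases h01 with h1 | h1 <;> rw [h1] at hjneg
    · rw [hf0] at hjneg; omega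
    · rw [hf1] at hjneg; omega
  have hjn : j < s.length := by omega
  have hprev : 0 ≤ f (j-1) := hjmin _ (by omega)
  have hprev2 : 0 ≤ f (j-2) := hjmin _ (by omega)
  -- the letter at position j-1
  obtain ⟨c1, hc1⟩ : ∃ c, s[j-1]? = some c :=
    ⟨_, List.getElem?_eq_getElem (show j - 1 < s.length by omega)⟩
  have hstepj : f j = f (j-1) + (if c1 = x then 1 else -1) := by
    have h1 := bal_step x s (j-1) c1 hc1
    rwa [show j - 1 + 1 = j by omega] at h1
  have hc1x : c1 = !x := by
    rcases bool_cases c1 x with h | h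
    · rw [if_pos h] at hstepj; omega
    · exact h
  have hfj1 : f (j-1) = 0 := by
    rw [hc1x, if_neg (Bool.not_ne_self x)] at hstepj
    omega
  -- the letter at position j-2
  obtain ⟨c2, hc2⟩ : ∃ c, s[j-2]? = some c :=
    ⟨_, List.getElem?_eq_getElem (show j - 2 < s.length by omega)⟩
  have hstepj2 : f (j-1) = f (j-2) + (if c2 = x then 1 else -1) := by
    have h1 := bal_step x s (j-2) c2 hc2
    rwa [show j - 2 + 1 = j - 1 by omega] at h1
  have hc2x : c2 = !x := by
    rcases bool_cases c2 x with h | h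
    · rw [if_pos h, hfj1] at hstepj2; omega
    · exact h
  rw [hc1x] at hc1
  rw [hc2x] at hc2
  -- the split
  have htlen : (s.take (j-1)).length = j - 1 := by rw [List.length_take]; omega
  have hulen : (s.drop (j-1)).length = s.length - (j-1) := by rw [List.length_drop]
  have hth : (s.take (j-1)).head? = some x := by
    rw [List.head?_eq_getElem?, List.getElem?_take, if_pos (show 0 < j - 1 by omega),
      ← List.head?_eq_getElem?, hhead]
  have htl : (s.take (j-1)).getLast? = some (!x) := by
    rw [List.getLast?_eq_getElem?, htlen, List.getElem?_take,
      if_pos (show j - 1 - 1 < j - 1 by omega), show j - 1 - 1 = j - 2 by omega, hc2]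
  have huh : (s.drop (j-1)).head? = some (!x) := by
    rw [List.head?_drop, hc1]
  have hul : (s.drop (j-1)).getLast? = some x := by
    rw [List.getLast?_eq_getElem?, hulen, List.getElem?_drop,
      show j - 1 + (s.length - (j-1) - 1) = s.length - 1 by omega, hlastx]
  have htbal : Balanced (s.take (j-1)) := (balanced_iff_bal x _).2 hfj1
  have hubal : Balanced (s.drop (j-1)) := by
    have hc1' : (s.take (j-1)).count true + (s.drop (j-1)).count true = s.count true := by
      rw [← List.count_append, List.take_append_drop]
    have hc2' : (s.take (j-1)).count false + (s.drop (j-1)).count false = s.count false := by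
      rw [← List.count_append, List.take_append_drop]
    have h1 : (s.take (j-1)).count true = (s.take (j-1)).count false := htbal
    have h2 : s.count true = s.count false := hbal
    show (s.drop (j-1)).count true = (s.drop (j-1)).count false
    omega
  refine ⟨s.take (j-1), s.drop (j-1), ⟨htbal, Or.inr ?_⟩, ⟨hubal, Or.inr ?_⟩, ?_, ?_,
    (List.take_append_drop _ s).symm⟩
  · rw [hth, htl]; simp
  · rw [huh, hul]; simp
  · intro h; rw [h] at htlen; simp at htlen; omega
  · intro h; rw [h] at hulen; simp at hulen; omega
end NCP
end

section
/- For every k ∈ ℕ, the language S({a}, {b}, k) over the two-letter alphabet {a, b} contains every x*y-balanced binary string of length at most 2k. -/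
open scoped Classical

namespace NCP

/-- count true + count false = length -/
lemma count_add_count (l : List Bool) : l.count true + l.count false = l.length := by
  induction l with
  | nil => simp
  | cons x t ih => cases x <;> simp [List.count_cons] <;> omega

/-- height of prefix -/
def hgt (w : List Bool) (i : ℕ) : ℤ :=
  ((w.take i).count true : ℤ) - ((w.take i).count false : ℤ)

lemma hgt_zero (w : List Bool) : hgt w 0 = 0 := by simp [hgt]

lemma hgt_succ (w : List Bool) (i : ℕ) (h : i < w.length) :
    hgt w (i + 1) = hgt w i + (bif w[i] then 1 else -1) := by
  have ht : w.take (i+1) = w.take i ++ [w[i]] := by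
    rw [List.take_succ, List.getElem?_eq_getElem h]; rfl
  cases hb : w[i] <;>
    simp [hgt, ht, List.count_append, hb, List.count_singleton'] <;> omega

lemma hgt_length (w : List Bool) (hb : Balanced w) : hgt w w.length = 0 := by
  unfold hgt; rw [List.take_length, hb, sub_self]

lemma balanced_take (w : List Bool) (i : ℕ) (h : hgt w i = 0) : Balanced (w.take i) := by
  unfold hgt at h; unfold Balanced; omega

lemma balanced_drop (w : List Bool) (i : ℕ) (hb : Balanced w) (h : hgt w i = 0) :
    Balanced (w.drop i) := by
  unfold Balanced at *
  have h1 := congrArg (List.count true) (List.take_append_drop i w)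
  have h2 := congrArg (List.count false) (List.take_append_drop i w)
  rw [List.count_append] at h1 h2
  unfold hgt at h
  omega

/-- split lemma, case head = last = true -/
lemma split_tt (w : List Bool) (hb : Balanced w)
    (hh : w.head? = some true) (hl : w.getLast? = some true) :
    ∃ u v, w = u ++ v ∧ XYBal u ∧ XYBal v ∧ u ≠ [] ∧ v ≠ [] := by
  have hne : w ≠ [] := by rintro rfl; simp at hh
  set n := w.length with hn
  have hnpos : 0 < n := List.length_pos_iff.mpr hne
  have hw0 : w[0] = true := by
    rw [List.head?_eq_getElem?, List.getElem?_eq_getElem hnpos] at hh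
    exact Option.some_injective _ hh
  have hwn : w[n-1] = true := by
    rw [List.getLast?_eq_getElem?, List.getElem?_eq_getElem (by omega : n - 1 < n)] at hl
    exact Option.some_injective _ hl
  have hgn : hgt w n = 0 := hgt_length w hb
  have hn2 : 2 ≤ n := by
    have := count_add_count w
    have hc : w.count true = w.count false := hb
    have : 0 < w.count true := by
      have := List.count_pos_iff.mpr (by
        have : w[0] ∈ w := List.getElem_mem _
        rwa [hw0] at this : (true : Bool) ∈ w)
      omega
    omega
  have hg1 : hgt w 1 = 1 := by
    have := hgt_succ w 0 (by omega)
    rw [hgt_zero, hw0] at this; simpa using this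
  have hgn1 : hgt w (n-1) = -1 := by
    have := hgt_succ w (n-1) (by omega)
    rw [(by omega : n - 1 + 1 = n), hgn, hwn] at this
    simp at this; omega
  have hex : ∃ i, hgt w i < 0 := ⟨n-1, by omega⟩
  classical
  set i := Nat.find hex with hi
  have hineg : hgt w i < 0 := Nat.find_spec hex
  have hmin : ∀ j < i, 0 ≤ hgt w j := fun j hj => le_of_not_gt (Nat.find_min hex hj)
  have hile : i ≤ n - 1 := Nat.find_le (by omega)
  have hi0 : i ≠ 0 := by intro h; rw [h, hgt_zero] at hineg; omega
  have hi1 : i ≠ 1 := by intro h; rw [h, hg1] at hineg; omega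
  have hi2 : 2 ≤ i := by omega
  set j := i - 1 with hjdef
  have hj1 : 1 ≤ j := by omega
  have hjn : j < n := by omega
  have hstepj := hgt_succ w j hjn
  rw [(by omega : j + 1 = i)] at hstepj
  have hgj : 0 ≤ hgt w j := hmin j (by omega)
  have hwj : w[j] = false := by
    cases hc : w[j]
    · rfl
    · rw [hc] at hstepj; simp at hstepj; omega
  rw [hwj] at hstepj; simp at hstepj
  have hgj0 : hgt w j = 0 := by omega
  have hjm : j - 1 < n := by omega
  have hstepj1 := hgt_succ w (j-1) hjm
  rw [(by omega : j - 1 + 1 = j)] at hstepj1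
  have hgjm : 0 ≤ hgt w (j-1) := hmin (j-1) (by omega)
  have hwjm : w[j-1] = false := by
    cases hc : w[j-1]
    · rfl
    · rw [hc] at hstepj1; simp at hstepj1; omega
  refine ⟨w.take j, w.drop j, (List.take_append_drop j w).symm, ?_, ?_, ?_, ?_⟩
  · refine ⟨balanced_take w j hgj0, Or.inr ?_⟩
    have hh' : (w.take j).head? = some true := by
      rw [List.head?_eq_getElem?, List.getElem?_take]
      rw [if_pos (by omega), List.getElem?_eq_getElem hnpos, hw0]
    have hlt : (w.take j).length = j := by simp; omega
    have hl' : (w.take j).getLast? = some false := by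
      rw [List.getLast?_eq_getElem?, hlt, List.getElem?_take]
      rw [if_pos (by omega), List.getElem?_eq_getElem (by omega : j - 1 < n), hwjm]
    rw [hh', hl']; simp
  · refine ⟨balanced_drop w j hb hgj0, Or.inr ?_⟩
    have hh' : (w.drop j).head? = some false := by
      rw [List.head?_eq_getElem?, List.getElem?_drop]
      rw [(by omega : j + 0 = j), List.getElem?_eq_getElem hjn, hwj]
    have hl' : (w.drop j).getLast? = some true := by
      have := List.getLast?_eq_getElem? (l := w.drop j)
      rw [this, List.length_drop, List.getElem?_drop]
      rw [(by omega : j + (n - j - 1) = n - 1), List.getElem?_eq_getElem (by omega : n-1 < n), hwn]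
    rw [hh', hl']; simp
  · exact List.length_pos_iff.mp (by rw [List.length_take]; omega)
  · exact List.length_pos_iff.mp (by rw [List.length_drop]; omega)



lemma count_map_not (l : List Bool) (b : Bool) : (l.map not).count b = l.count (!b) := by
  have := List.count_map_of_injective l not (fun x y => by cases x <;> cases y <;> simp) (!b)
  simpa using this

lemma balanced_map_not {l : List Bool} (h : Balanced l) : Balanced (l.map not) := by
  unfold Balanced at *
  rw [count_map_not, count_map_not]; simp [h]

lemma map_not_not (l : List Bool) : (l.map not).map not = l := by
  simp [List.map_map, Function.comp_def]

lemma not_inj : Function.Injective not := fun x y => by cases x <;> cases y <;> simp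

lemma xybal_map_not {l : List Bool} (h : XYBal l) : XYBal (l.map not) := by
  refine ⟨balanced_map_not h.1, ?_⟩
  rcases h.2 with rfl | hne
  · left; rfl
  · right
    rw [List.head?_map, List.getLast?_map]
    exact fun hcon => hne (Option.map_injective not_inj hcon)

lemma split_lemma (w : List Bool) (hb : Balanced w) (hne : w ≠ [])
    (heq : w.head? = w.getLast?) :
    ∃ u v, w = u ++ v ∧ XYBal u ∧ XYBal v ∧ u ≠ [] ∧ v ≠ [] := by
  obtain ⟨c, hc⟩ : ∃ c, w.head? = some c := by
    cases w with
    | nil => exact absurd rfl hne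
    | cons a t => exact ⟨a, rfl⟩
  cases c with
  | true => exact split_tt w hb hc (heq ▸ hc)
  | false =>
      have hbm : Balanced (w.map not) := balanced_map_not hb
      have hh : (w.map not).head? = some true := by rw [List.head?_map, hc]; rfl
      have hl : (w.map not).getLast? = some true := by
        rw [List.getLast?_map, ← heq, hc]; rfl
      obtain ⟨u', v', hsplit, hu, hv, hu0, hv0⟩ := split_tt (w.map not) hbm hh hl
      refine ⟨u'.map not, v'.map not, ?_, xybal_map_not hu, xybal_map_not hv,
        by simpa using hu0, by simpa using hv0⟩
      have := congrArg (List.map not) hsplit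
      rw [map_not_not, List.map_append] at this
      exact this

lemma nil_mem_SL (L1 L2 : Language Bool) (k : ℕ) : [] ∈ SL L1 L2 k := by
  cases k with
  | zero => exact Language.mem_one _ |>.mpr rfl
  | succ k =>
      show _ ∈ _ + _ + 1
      rw [Language.mem_add]
      exact Or.inr ((Language.mem_one _).mpr rfl)

lemma main_ind (k : ℕ) :
    (∀ s : List Bool, XYBal s → s.length ≤ 2 * k →
      s ∈ SL ({[true]} : Language Bool) ({[false]} : Language Bool) k) ∧
    (∀ s : List Bool, Balanced s → s.length ≤ 2 * k →
      s ∈ SL ({[true]} : Language Bool) ({[false]} : Language Bool) k *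
          SL ({[true]} : Language Bool) ({[false]} : Language Bool) k) := by
  induction k with
  | zero =>
      constructor
      · intro s hs hlen
        have : s = [] := List.eq_nil_of_length_eq_zero (by omega)
        subst this; exact nil_mem_SL _ _ 0
      · intro s hs hlen
        have : s = [] := List.eq_nil_of_length_eq_zero (by omega)
        subst this
        exact Language.mem_mul.mpr ⟨[], nil_mem_SL _ _ 0, [], nil_mem_SL _ _ 0, rfl⟩
  | succ k ih =>
      have hA : ∀ s : List Bool, XYBal s → s.length ≤ 2 * (k+1) →
          s ∈ SL ({[true]} : Language Bool) ({[false]} : Language Bool) (k+1) := by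
        intro s hs hlen
        rcases eq_or_ne s [] with rfl | hne
        · exact nil_mem_SL _ _ _
        obtain ⟨x, t0, rfl⟩ := List.exists_cons_of_ne_nil hne
        have ht0 : t0 ≠ [] := by
          rintro rfl
          have hb := hs.1
          unfold Balanced at hb
          cases x <;> simp [List.count_cons] at hb
        obtain ⟨t, y, rfl⟩ : ∃ t y, t0 = t ++ [y] :=
          ⟨t0.dropLast, t0.getLast ht0, (List.dropLast_append_getLast ht0).symm⟩
        have hgl : (x :: (t ++ [y])).getLast? = some y := by
          rw [← List.cons_append, List.getLast?_concat]
        have hxy : x ≠ y := by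
          rcases hs.2 with h | h
          · simp at h
          · rw [List.head?_cons, hgl] at h
            exact fun hc => h (by rw [hc])
        have htb : Balanced t := by
          have hb := hs.1
          unfold Balanced at hb ⊢
          cases x <;> cases y <;> simp at hxy <;>
            simp [List.count_cons, List.count_append] at hb <;> omega
        have htlen : t.length ≤ 2 * k := by
          simp [List.length_cons, List.length_append] at hlen
          omega
        obtain ⟨t1, ht1, t2, ht2, ht12⟩ := Language.mem_mul.mp (ih.2 t htb htlen)
        show _ ∈ _ * _ * _ * _ + _ * _ * _ * _ + 1
        rw [Language.mem_add, Language.mem_add]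
        have hform : x :: (t ++ [y]) = (([x] ++ t1) ++ t2) ++ [y] := by
          rw [← ht12]; simp
        cases x
        · have hy2 : y = true := by
            cases y
            · exact absurd rfl hxy
            · rfl
          subst hy2
          left; right
          refine Language.mem_mul.mpr ⟨([false] ++ t1) ++ t2, ?_, [true], rfl, hform.symm⟩
          refine Language.mem_mul.mpr ⟨[false] ++ t1, ?_, t2, ht2, rfl⟩
          exact Language.mem_mul.mpr ⟨[false], rfl, t1, ht1, rfl⟩
        · have hy2 : y = false := by
            cases y
            · rfl
            · exact absurd rfl hxy
          subst hy2
          left; left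
          refine Language.mem_mul.mpr ⟨([true] ++ t1) ++ t2, ?_, [false], rfl, hform.symm⟩
          refine Language.mem_mul.mpr ⟨[true] ++ t1, ?_, t2, ht2, rfl⟩
          exact Language.mem_mul.mpr ⟨[true], rfl, t1, ht1, rfl⟩
      refine ⟨hA, ?_⟩
      intro s hs hlen
      rcases eq_or_ne s [] with rfl | hne
      · exact Language.mem_mul.mpr ⟨[], nil_mem_SL _ _ _, [], nil_mem_SL _ _ _, rfl⟩
      by_cases heq : s.head? = s.getLast?
      · obtain ⟨u, v, rfl, hu, hv, hu0, hv0⟩ := split_lemma s hs hne heq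
        have hlu : u.length ≤ 2 * (k+1) := by
          have := List.length_append (as := u) (bs := v); omega
        have hlv : v.length ≤ 2 * (k+1) := by
          have := List.length_append (as := u) (bs := v); omega
        exact Language.mem_mul.mpr ⟨u, hA u hu hlu, v, hA v hv hlv, rfl⟩
      · exact Language.mem_mul.mpr ⟨s, hA s ⟨hs, Or.inr heq⟩ hlen, [],
          nil_mem_SL _ _ _, by simp⟩

/-- `S({a}, {b}, k)` contains every `x*y`-balanced binary string of
length at most `2k`. -/
theorem stmt12 (k : ℕ) (s : List Bool) (hs : XYBal s) (hlen : s.length ≤ 2 * k) :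
    s ∈ SL ({[true]} : Language Bool) ({[false]} : Language Bool) k :=
  (main_ind k).1 s hs hlen

end NCP
end

section
/- For every k ∈ ℕ, the language S({a}, {b}, ⌊k/2⌋)^* (the Kleene star of S({a}, {b}, ⌊k/2⌋)) over the two-letter alphabet {a, b} contains every balanced binary string of length at most k. -/
open scoped Classical

namespace NCP

/-! ### Auxiliary machinery for Statement 13 -/

/-- signed count: #x − #(!x). -/
def g (x : Bool) (w : List Bool) : ℤ := (w.count x : ℤ) - w.count (!x)

lemma g_nil (x : Bool) : g x [] = 0 := by simp [g]

lemma g_append (x : Bool) (a b : List Bool) : g x (a ++ b) = g x a + g x b := by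
  simp [g]; ring

lemma g_cons (x c : Bool) (w : List Bool) :
    g x (c :: w) = (if c = x then 1 else -1) + g x w := by
  cases x <;> cases c <;> simp [g] <;> ring

lemma balanced_iff_g (x : Bool) (w : List Bool) : Balanced w ↔ g x w = 0 := by
  cases x <;> simp [Balanced, g, sub_eq_zero] <;> omega

lemma count_tf (w : List Bool) : w.count true + w.count false = w.length := by
  induction w with
  | nil => simp
  | cons c t ih => cases c <;> simp [List.count_cons] <;> omega

lemma balanced_length_even (w : List Bool) (h : Balanced w) : w.length = 2 * w.count true := by
  have := count_tf w; unfold Balanced at h; omega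

lemma cross : ∀ (n : ℕ) (x : Bool) (w : List Bool), w.length ≤ n → g x w < 0 →
    ∃ a b, w = a ++ (!x) :: b ∧ g x a = 0 ∧ ∀ p q, a = p ++ q → 0 ≤ g x p := by
  intro n
  induction n with
  | zero =>
    intro x w hw hg
    have : w = [] := List.eq_nil_of_length_eq_zero (Nat.le_zero.mp hw)
    subst this; simp [g_nil] at hg
  | succ n ih =>
    intro x w hw hg
    rcases w with _ | ⟨c, t⟩
    · simp [g_nil] at hg
    by_cases hc : c = x
    · subst hc
      have hgt : g c t < -1 := by
        have := g_cons c c t; simp at this; omega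
      have htl : t.length ≤ n := by simp at hw; omega
      obtain ⟨a, b, hab, ha, hpre⟩ := ih c t htl (by omega)
      have hbl : b.length ≤ n := by
        have := congrArg List.length hab
        simp at this; omega
      have hgb : g c b < 0 := by
        have h1 : g c t = g c a + g c ((!c) :: b) := by rw [hab, g_append]
        have h2 : g c ((!c) :: b) = -1 + g c b := by
          rw [g_cons]; simp
        omega
      obtain ⟨a', b', hab', ha', hpre'⟩ := ih c b hbl hgb
      refine ⟨c :: a ++ (!c) :: a', b', ?_, ?_, ?_⟩
      · rw [hab, hab']; simp
      · rw [show c :: a ++ (!c) :: a' = (c :: a) ++ ((!c) :: a') by simp,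
          g_append, g_cons, g_cons]
        simp; omega
      · intro p q hpq
        rcases p with _ | ⟨d, p₁⟩
        · simp [g_nil]
        · have hd : d = c := by
            have := congrArg (fun l => l.head?) hpq
            simp at this; exact this.symm
          subst hd
          have hpq₁ : a ++ (!d) :: a' = p₁ ++ q := by
            have := congrArg List.tail hpq; simpa using this
          rcases List.append_eq_append_iff.mp hpq₁.symm with ⟨a₂, h1, h2⟩ | ⟨c₂, h1, h2⟩
          · have : 0 ≤ g d p₁ := hpre p₁ a₂ h1
            rw [g_cons]; simp; omega
          · rcases c₂ with _ | ⟨e, c₃⟩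
            · simp at h1
              subst h1
              rw [g_cons]; simp; omega
            · have he : e = !d := by
                have h3 := congrArg (fun l => l.head?) h2
                simp at h3; revert h3; cases d <;> cases e <;> decide
              subst he
              have hc₃ : a' = c₃ ++ q := by
                have := congrArg List.tail h2; simpa using this
              have hgc₃ : 0 ≤ g d c₃ := hpre' c₃ q hc₃
              subst h1
              rw [g_cons]
              rw [show a ++ (!d) :: c₃ = a ++ [!d] ++ c₃ by simp, g_append, g_append]
              have : g d [!d] = -1 := by cases d <;> simp [g]
              simp; omega
    · have hc' : c = !x := by cases c <;> cases x <;> simp_all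
      subst hc'
      refine ⟨[], t, by simp, g_nil x, ?_⟩
      intro p q hpq
      have : p = [] := (List.append_eq_nil_iff.mp hpq.symm).1
      simp [this, g_nil]


/-- `xy`-balanced strings: balanced, and empty or first letter the negation of last. -/
def XY (s : List Bool) : Prop :=
  Balanced s ∧ (s = [] ∨ ∃ x, s.head? = some x ∧ s.getLast? = some (!x))

lemma g_singleton (x c : Bool) : g x [c] = if c = x then 1 else -1 := by
  have := g_cons x c []; simpa [g_nil] using this

lemma getLast?_cons_ne (x : Bool) (t : List Bool) (h : t ≠ []) :
    (x :: t).getLast? = t.getLast? := by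
  rcases t with _ | ⟨c, t⟩
  · simp at h
  · rfl

/-- Every balanced word splits into two `xy`-balanced words. -/
lemma split (w : List Bool) (hw : Balanced w) : ∃ u v, w = u ++ v ∧ XY u ∧ XY v := by
  rcases hn : w with _ | ⟨x, r⟩
  · subst hn
    exact ⟨[], [], by simp, ⟨hw, Or.inl rfl⟩, ⟨hw, Or.inl rfl⟩⟩
  subst hn
  have hne : (x :: r) ≠ [] := by simp
  set w := x :: r with hwdef
  have hlast : w.getLast? = some (w.getLast hne) := List.getLast?_eq_getLast hne
  by_cases hy : w.getLast hne = !x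
  · refine ⟨w, [], by simp, ?_, ?_⟩
    · exact ⟨hw, Or.inr ⟨x, by simp [hwdef], by rw [hlast, hy]⟩⟩
    · exact ⟨by simp [Balanced], Or.inl rfl⟩
  · have hy' : w.getLast hne = x := by revert hy; cases x <;> cases (w.getLast hne) <;> decide
    have hdl : w.dropLast ++ [x] = w := by
      conv_rhs => rw [← List.dropLast_append_getLast hne]
      rw [hy']
    have hgw : g x w = 0 := (balanced_iff_g x w).mp hw
    have hgdl : g x w.dropLast < 0 := by
      have := g_append x w.dropLast [x]
      rw [hdl] at this
      have h1 : g x [x] = 1 := by simp [g_singleton]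
      omega
    obtain ⟨a, b, hab, ha, hpre⟩ := cross w.dropLast.length x w.dropLast le_rfl hgdl
    refine ⟨a, (!x) :: b ++ [x], ?_, ?_, ?_⟩
    · rw [← hdl, hab]; simp
    · -- XY a
      refine ⟨(balanced_iff_g x a).mpr ha, ?_⟩
      have hane : a ≠ [] := by
        intro h
        subst h
        simp at hab
        rw [← hdl, hab] at hwdef
        have := congrArg (fun l => l.head?) hwdef
        revert this; cases x <;> simp
      refine Or.inr ⟨x, ?_, ?_⟩
      · -- head of a is x
        have h1 : w.head? = some x := by simp [hwdef]
        rw [← hdl, hab] at h1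
        rwa [List.append_assoc, List.head?_append_of_ne_nil _ hane] at h1
      · -- last of a is !x
        have h2 : a.dropLast ++ [a.getLast hane] = a := List.dropLast_append_getLast hane
        have h3 : 0 ≤ g x a.dropLast := hpre a.dropLast [a.getLast hane] h2.symm
        have h4 : g x a.dropLast + g x [a.getLast hane] = 0 := by
          rw [← g_append, h2, ha]
        have h5 : a.getLast hane = !x := by
          by_contra hcon
          have : a.getLast hane = x := by revert hcon; cases x <;> cases (a.getLast hane) <;> decide
          rw [this] at h4
          simp [g_singleton] at h4
          omega
        rw [List.getLast?_eq_getLast hane, h5]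
    · -- XY ((!x) :: b ++ [x])
      constructor
      · rw [balanced_iff_g x]
        have := g_append x a ((!x) :: b)
        rw [← hab] at this
        have h2 := g_append x ((!x) :: b) [x]
        have h3 : g x [x] = 1 := by simp [g_singleton]
        have h4 : g x ((!x) :: b ++ [x]) = g x ((!x) :: b) + 1 := by rw [h2, h3]
        have h5 : g x w = g x w.dropLast + 1 := by
          have := g_append x w.dropLast [x]
          rw [hdl] at this; omega
        omega
      · refine Or.inr ⟨!x, by simp, ?_⟩
        rw [show (!x) :: b ++ [x] = ((!x) :: b) ++ [x] by simp, List.getLast?_concat]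
        simp

abbrev SLtf (j : ℕ) : Language Bool := SL ({[true]} : Language Bool) ({[false]} : Language Bool) j

lemma mem_SL_cons (x : Bool) (j : ℕ) (u v : List Bool) (hu : u ∈ SLtf j) (hv : v ∈ SLtf j) :
    x :: (u ++ v ++ [!x]) ∈ SLtf (j + 1) := by
  cases x
  · -- false :: ... : second summand L2 * S * S * L1
    simp only [Bool.not_false]
    show _ ∈ _ + _ + _
    rw [Language.mem_add, Language.mem_add]
    left; right
    have : false :: (u ++ v ++ [true]) = (([false] ++ u) ++ v) ++ [true] := by simp
    rw [this]
    exact Language.append_mem_mul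
      (Language.append_mem_mul (Language.append_mem_mul rfl hu) hv) rfl
  · simp only [Bool.not_true]
    show _ ∈ _ + _ + _
    rw [Language.mem_add, Language.mem_add]
    left; left
    have : true :: (u ++ v ++ [false]) = (([true] ++ u) ++ v) ++ [false] := by simp
    rw [this]
    exact Language.append_mem_mul
      (Language.append_mem_mul (Language.append_mem_mul rfl hu) hv) rfl

lemma nil_mem_SL_s13 (j : ℕ) : [] ∈ SLtf j := by
  cases j with
  | zero => exact Language.mem_one _ |>.mpr rfl
  | succ j =>
    show _ ∈ _ + _ + _
    rw [Language.mem_add]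
    right
    exact Language.mem_one _ |>.mpr rfl

lemma main : ∀ j : ℕ,
    (∀ s, XY s → s.length ≤ 2 * j → s ∈ SLtf j) ∧
    (∀ w, Balanced w → w.length ≤ 2 * j → w ∈ SLtf j * SLtf j) := by
  intro j
  induction j with
  | zero =>
    constructor
    · intro s hs hl
      have : s = [] := List.eq_nil_of_length_eq_zero (by omega)
      subst this; exact nil_mem_SL_s13 0
    · intro w hwb hl
      have : w = [] := List.eq_nil_of_length_eq_zero (by omega)
      subst this
      exact Language.mem_mul.mpr ⟨[], nil_mem_SL_s13 0, [], nil_mem_SL_s13 0, rfl⟩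
  | succ j ih =>
    have F : ∀ s, XY s → s.length ≤ 2 * (j + 1) → s ∈ SLtf (j + 1) := by
      intro s hs hl
      obtain ⟨hbal, hxy⟩ := hs
      rcases hxy with rfl | ⟨x, hhead, hlast⟩
      · exact nil_mem_SL_s13 _
      · -- s nonempty, s = x :: m ++ [!x]
        have hne : s ≠ [] := by intro h; subst h; simp at hhead
        have hlen2 : 2 ≤ s.length := by
          have := balanced_length_even s hbal
          have : s.length ≠ 0 := by simpa using hne
          omega
        -- decompose
        obtain ⟨t, hst⟩ : ∃ t, s = x :: t := by
          rcases s with _ | ⟨c, t⟩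
          · simp at hhead
          · simp at hhead; exact ⟨t, by rw [hhead]⟩
        have htne : t ≠ [] := by
          intro h; subst h; subst hst; simp at hlen2
        obtain ⟨m, hm⟩ : ∃ m, t = m ++ [!x] := by
          have h1 : t.getLast? = some (!x) := by
            rw [hst] at hlast
            rwa [getLast?_cons_ne x t htne] at hlast
          refine ⟨t.dropLast, ?_⟩
          have h2 := List.dropLast_append_getLast htne
          rw [List.getLast?_eq_getLast htne] at h1
          simp at h1
          rw [h1] at h2
          exact h2.symm
        have hsm : s = x :: m ++ [!x] := by rw [hst, hm]; rfl
        have hmbal : Balanced m := by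
          rw [balanced_iff_g x] at hbal ⊢
          rw [hsm] at hbal
          have h1 := g_append x (x :: m) [!x]
          have h2 := g_cons x x m
          have h3 : g x [!x] = -1 := by simp [g_singleton]
          simp at h2
          have : (x :: m) ++ [!x] = x :: m ++ [!x] := by simp
          rw [this] at h1
          omega
        have hmlen : m.length ≤ 2 * j := by
          have := congrArg List.length hsm
          simp at this
          omega
        obtain ⟨u, hu, v, hv, huv⟩ := Language.mem_mul.mp (ih.2 m hmbal hmlen)
        rw [hsm, ← huv]
        have : x :: (u ++ v) ++ [!x] = x :: (u ++ v ++ [!x]) := by simp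
        rw [this]
        exact mem_SL_cons x j u v hu hv
    refine ⟨F, ?_⟩
    intro w hwb hl
    obtain ⟨u, v, huv, hxu, hxv⟩ := split w hwb
    have hul : u.length ≤ 2 * (j + 1) := by
      have := congrArg List.length huv; simp at this; omega
    have hvl : v.length ≤ 2 * (j + 1) := by
      have := congrArg List.length huv; simp at this; omega
    rw [huv]
    exact Language.append_mem_mul (F u hxu hul) (F v hxv hvl)

/-- the Kleene star of `S({a}, {b}, ⌊k/2⌋)` contains every balanced
binary string of length at most `k`. -/
theorem stmt13 (k : ℕ) (s : List Bool) (hs : Balanced s) (hlen : s.length ≤ k) :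
    s ∈ KStar.kstar (SL ({[true]} : Language Bool) ({[false]} : Language Bool) (k / 2)) := by
  have hl : s.length ≤ 2 * (k / 2) := by
    have := balanced_length_even s hs
    omega
  obtain ⟨a, ha, b, hb, hab⟩ := Language.mem_mul.mp ((main (k / 2)).2 s hs hl)
  exact Language.mem_kstar.mpr ⟨[a, b], by simp [← hab], by
    intro y hy
    simp at hy
    rcases hy with rfl | rfl
    · exact ha
    · exact hb⟩


end NCP
end
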